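/- arXiv:2003.12408 — 2 statements merged into one kernel-verified Lean document; each statement's English description precedes it below -/
import Mathlib

section
/- Population double-robustness identity. Under Assumptions 1 and 2, let ε ∈ (0,1/2), let e₀ : 𝒳 → [ε,1−ε], r₀ : {0,1}×𝒳×𝒮 → [ε,1], μ₀ : {0,1}×𝒳 → ℝ and μ̃₀ : {0,1}×𝒳×𝒮 → ℝ be measurable, and assume Y(1), μ̃₀(1,X,S(1)), μ₀(1,X), μ̃*(1,X,S(1)), μ*(1,X) ∈ L¹(P). Then E[ μ₀(1,X) + (TR/(e₀(X)r₀(1,X,S)))·(Y − μ̃₀(1,X,S)) + (T/e₀(X))·(μ̃₀(1,X,S) − μ₀(1,X)) ] − E[Y(1)] = E[ (e*(X)·(r*(1,X,S(1)) − r₀(1,X,S(1)))/(e₀(X)·r₀(1,X,S(1))))·(μ̃*(1,X,S(1)) − μ̃₀(1,X,S(1))) ] + E[ ((e*(X) − e₀(X))/e₀(X))·(μ*(1,X) − μ₀(1,X)) ]. In particular, if almost surely (μ̃₀(1,X,S(1)) − μ̃*(1,X,S(1)))·(r₀(1,X,S(1)) − r*(1,X,S(1))) = 0 and (μ₀(1,X)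 − μ*(1,X))·(e₀(X) − e*(X)) = 0, then the left-hand side equals 0, i.e., the uncentered influence function with possibly misspecified nuisances has mean E[Y(1)]. -/
open MeasureTheory ProbabilityTheory Filter
open scoped ENNReal NNReal Topology

noncomputable section

namespace Surrogate

variable {Ω 𝒳 𝒮 : Type*} [MeasurableSpace Ω] [MeasurableSpace 𝒳] [MeasurableSpace 𝒮]

/-- Potential value indexed by `t ∈ {0,1}` (encoded as a real number). -/
def pot {α : Type*} (a0 a1 : Ω → α) (t : ℝ) : Ω → α := if t = 1 then a1 else a0

/-- Observed value `a(T)`. -/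
def obs {α : Type*} (T : Ω → ℝ) (a0 a1 : Ω → α) : Ω → α := fun ω => if T ω = 1 then a1 ω else a0 ω

/-- σ-algebra generated by one random variable. -/
def mX (X : Ω → 𝒳) : MeasurableSpace Ω := MeasurableSpace.comap X inferInstance

/-- σ-algebra generated by a pair of random variables. -/
def m2 {α β : Type*} [MeasurableSpace α] [MeasurableSpace β] (U : Ω → α) (V : Ω → β) :
    MeasurableSpace Ω := MeasurableSpace.comap (fun ω => (U ω, V ω)) inferInstance

/-- σ-algebra generated by a triple of random variables. -/
def m3 {α β γ : Type*} [MeasurableSpace α] [MeasurableSpace β] [MeasurableSpace γ]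
    (U : Ω → α) (V : Ω → β) (W : Ω → γ) : MeasurableSpace Ω :=
  MeasurableSpace.comap (fun ω => (U ω, V ω, W ω)) inferInstance

/-- σ-algebra generated by four random variables. -/
def m4 {α β γ δ : Type*} [MeasurableSpace α] [MeasurableSpace β] [MeasurableSpace γ]
    [MeasurableSpace δ] (U : Ω → α) (V : Ω → β) (W : Ω → γ) (Z : Ω → δ) : MeasurableSpace Ω :=
  MeasurableSpace.comap (fun ω => (U ω, V ω, W ω, Z ω)) inferInstance

/-- A real-valued function is bounded. -/
def Bdd {α : Type*} (f : α → ℝ) : Prop := ∃ C, ∀ a, |f a| ≤ C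

/-- Conditional independence of two random variables given a sub-σ-algebra, phrased through
bounded measurable test functions. -/
def CondIndepBdd (P : Measure Ω) (m : MeasurableSpace Ω) {α β : Type*}
    [MeasurableSpace α] [MeasurableSpace β] (U : Ω → α) (V : Ω → β) : Prop :=
  ∀ f : α → ℝ, Measurable f → Bdd f → ∀ g : β → ℝ, Measurable g → Bdd g →
    P[fun ω => f (U ω) * g (V ω)|m]
      =ᵐ[P] fun ω => (P[fun ω' => f (U ω')|m]) ω * (P[fun ω' => g (V ω')|m]) ω

/-- Variance `E[Z²] − (E[Z])²`. -/
def Var (P : Measure Ω) (Z : Ω → ℝ) : ℝ := (∫ ω, (Z ω) ^ 2 ∂P) - (∫ ω, Z ω ∂P) ^ 2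

/-- Conditional variance `E[Z²|m] − (E[Z|m])²`. -/
def condVar (P : Measure Ω) (m : MeasurableSpace Ω) (Z : Ω → ℝ) : Ω → ℝ :=
  fun ω => (P[fun ω' => (Z ω') ^ 2|m]) ω - ((P[Z|m]) ω) ^ 2

/-- The efficient influence function ψ* of Theorem 1 (labeling propensity depending on
`(t,x,s)`), centered at `d`. -/
def psiStar (X : Ω → 𝒳) (T R : Ω → ℝ) (S : Ω → 𝒮) (Y : Ω → ℝ) (e : 𝒳 → ℝ)
    (r : ℝ → 𝒳 → 𝒮 → ℝ) (mt : ℝ → 𝒳 → 𝒮 → ℝ) (mu : ℝ → 𝒳 → ℝ) (d : ℝ) : Ω → ℝ :=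
  fun ω =>
    mu 1 (X ω) - mu 0 (X ω)
      + T ω * R ω / (e (X ω) * r 1 (X ω) (S ω)) * (Y ω - mt 1 (X ω) (S ω))
      - (1 - T ω) * R ω / ((1 - e (X ω)) * r 0 (X ω) (S ω)) * (Y ω - mt 0 (X ω) (S ω))
      + T ω / e (X ω) * (mt 1 (X ω) (S ω) - mu 1 (X ω))
      - (1 - T ω) / (1 - e (X ω)) * (mt 0 (X ω) (S ω) - mu 0 (X ω))
      - d

/-- The influence function ψ_I of Settings I and II (no surrogates), centered at `d`. -/
def psiI (X : Ω → 𝒳) (T R Y : Ω → ℝ) (e : 𝒳 → ℝ) (r2 : ℝ → 𝒳 → ℝ) (mu : ℝ → 𝒳 → ℝ)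
    (d : ℝ) : Ω → ℝ :=
  fun ω =>
    mu 1 (X ω) - mu 0 (X ω)
      + T ω * R ω / (e (X ω) * r2 1 (X ω)) * (Y ω - mu 1 (X ω))
      - (1 - T ω) * R ω / ((1 - e (X ω)) * r2 0 (X ω)) * (Y ω - mu 0 (X ω))
      - d

/-- The influence function ψ_III of Setting III (labeling propensity depending on `(t,x)`),
centered at `d`. -/
def psiIII (X : Ω → 𝒳) (T R : Ω → ℝ) (S : Ω → 𝒮) (Y : Ω → ℝ) (e : 𝒳 → ℝ)
    (r2 : ℝ → 𝒳 → ℝ) (mt : ℝ → 𝒳 → 𝒮 → ℝ) (mu : ℝ → 𝒳 → ℝ) (d : ℝ) : Ω → ℝ :=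
  fun ω =>
    mu 1 (X ω) - mu 0 (X ω)
      + T ω * R ω / (e (X ω) * r2 1 (X ω)) * (Y ω - mt 1 (X ω) (S ω))
      - (1 - T ω) * R ω / ((1 - e (X ω)) * r2 0 (X ω)) * (Y ω - mt 0 (X ω) (S ω))
      + T ω / e (X ω) * (mt 1 (X ω) (S ω) - mu 1 (X ω))
      - (1 - T ω) / (1 - e (X ω)) * (mt 0 (X ω) (S ω) - mu 0 (X ω))
      - d

/-- The influence function ψ_IV of Setting IV (fully observed outcomes), centered at `d`. -/
def psiIV (X : Ω → 𝒳) (T Y : Ω → ℝ) (e : 𝒳 → ℝ) (mu : ℝ → 𝒳 → ℝ) (d : ℝ) : Ω → ℝ :=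
  fun ω =>
    mu 1 (X ω) - mu 0 (X ω)
      + T ω / e (X ω) * (Y ω - mu 1 (X ω))
      - (1 - T ω) / (1 - e (X ω)) * (Y ω - mu 0 (X ω))
      - d

/-- The influence formula ψ evaluated on a data tuple `w = (x, t, s, r, y)` with nuisances
`(e, r, μ̃, μ)`, centered at `d`. -/
def psiData {𝒳' 𝒮' : Type*} (w : 𝒳' × ℝ × 𝒮' × ℝ × ℝ) (e : 𝒳' → ℝ) (r : ℝ → 𝒳' → 𝒮' → ℝ)
    (mt : ℝ → 𝒳' → 𝒮' → ℝ) (mu : ℝ → 𝒳' → ℝ) (d : ℝ) : ℝ :=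
  mu 1 w.1 - mu 0 w.1
    + w.2.1 * w.2.2.2.1 / (e w.1 * r 1 w.1 w.2.2.1) * (w.2.2.2.2 - mt 1 w.1 w.2.2.1)
    - (1 - w.2.1) * w.2.2.2.1 / ((1 - e w.1) * r 0 w.1 w.2.2.1) * (w.2.2.2.2 - mt 0 w.1 w.2.2.1)
    + w.2.1 / e w.1 * (mt 1 w.1 w.2.2.1 - mu 1 w.1)
    - (1 - w.2.1) / (1 - e w.1) * (mt 0 w.1 w.2.2.1 - mu 0 w.1)
    - d

end Surrogate

open Surrogate

section
namespace DRHelpers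

variable {Ω : Type*} {mΩ : MeasurableSpace Ω} {P : Measure Ω} [IsProbabilityMeasure P]

lemma bdd_mul_int {q Z : Ω → ℝ} (hq : Measurable q) (hZm : Measurable Z)
    (hZ : Integrable Z P) {C : ℝ} (hC : ∀ ω, |q ω| ≤ C) :
    Integrable (fun ω => q ω * Z ω) P := by
  refine Integrable.mono' (hZ.abs.const_mul C) ((hq.mul hZm).aestronglyMeasurable) ?_
  filter_upwards with ω
  simp only [Real.norm_eq_abs, abs_mul]
  exact mul_le_mul_of_nonneg_right (hC ω) (abs_nonneg _)

lemma int_of_bdd {q : Ω → ℝ} (hq : Measurable q) {C : ℝ} (hC : ∀ ω, |q ω| ≤ C) :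
    Integrable q P := by
  refine Integrable.mono' (integrable_const C) hq.aestronglyMeasurable ?_
  filter_upwards with ω
  simpa using hC ω

lemma integral_mul_condexp {m : MeasurableSpace Ω} (hm : m ≤ mΩ) {K Z : Ω → ℝ}
    (hK : StronglyMeasurable[m] K) (hZ : Integrable Z P)
    (hKZ : Integrable (fun ω => K ω * Z ω) P) :
    ∫ ω, K ω * Z ω ∂P = ∫ ω, K ω * (P[Z|m]) ω ∂P := by
  have h := condExp_mul_of_stronglyMeasurable_left (μ := P) hK (show Integrable (K * Z) P from hKZ) hZ
  calc ∫ ω, K ω * Z ω ∂P = ∫ ω, (K * Z) ω ∂P := rfl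
    _ = ∫ ω, (P[K * Z|m]) ω ∂P := (integral_condExp hm).symm
    _ = ∫ ω, (K * P[Z|m]) ω ∂P := integral_congr_ae h
    _ = ∫ ω, K ω * (P[Z|m]) ω ∂P := rfl

lemma integral_weight_mul_eq_zero {α : Type*} [mα : MeasurableSpace α]
    {V : Ω → α} (hV : Measurable V) {W : Ω → ℝ} (hWm : Measurable W) (hWi : Integrable W P)
    {C : Set (Set α)} (hgen : mα = MeasurableSpace.generateFrom C) (hπ : IsPiSystem C)
    (h0 : ∀ D ∈ C, ∫ ω in V ⁻¹' D, W ω ∂P = 0) (huniv : ∫ ω, W ω ∂P = 0)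
    {G : α → ℝ} (hG : Measurable G) (hGW : Integrable (fun ω => G (V ω) * W ω) P) :
    ∫ ω, G (V ω) * W ω ∂P = 0 := by
  have hfinp : (∫⁻ ω, ENNReal.ofReal (W ω) ∂P) < ⊤ := by
    refine lt_of_le_of_lt (lintegral_mono fun ω => ?_) hWi.2
    rw [Real.enorm_eq_ofReal_abs]
    exact ENNReal.ofReal_le_ofReal (le_abs_self _)
  have hfinm : (∫⁻ ω, ENNReal.ofReal (-W ω) ∂P) < ⊤ := by
    refine lt_of_le_of_lt (lintegral_mono fun ω => ?_) hWi.2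
    rw [Real.enorm_eq_ofReal_abs]
    exact ENNReal.ofReal_le_ofReal (neg_le_abs _)
  set ν₁ : Measure α := Measure.map V (P.withDensity fun ω => ((W ω).toNNReal : ℝ≥0∞)) with hν₁
  set ν₂ : Measure α := Measure.map V (P.withDensity fun ω => ((-W ω).toNNReal : ℝ≥0∞)) with hν₂
  have hcoe : ∀ x : ℝ, ((x.toNNReal : ℝ≥0∞)) = ENNReal.ofReal x := fun x => rfl
  have hval₁ : ∀ D : Set α, MeasurableSet D →
      ν₁ D = ∫⁻ ω in V ⁻¹' D, ENNReal.ofReal (W ω) ∂P := by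
    intro D hD
    rw [hν₁, Measure.map_apply hV hD, withDensity_apply _ (hV hD)]
    rfl
  have hval₂ : ∀ D : Set α, MeasurableSet D →
      ν₂ D = ∫⁻ ω in V ⁻¹' D, ENNReal.ofReal (-W ω) ∂P := by
    intro D hD
    rw [hν₂, Measure.map_apply hV hD, withDensity_apply _ (hV hD)]
    rfl
  have hkey : ∀ s : Set Ω, MeasurableSet s → (∫ ω in s, W ω ∂P = 0) →
      ∫⁻ ω in s, ENNReal.ofReal (W ω) ∂P = ∫⁻ ω in s, ENNReal.ofReal (-W ω) ∂P := by
    intro s hs h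
    have h2 := integral_eq_lintegral_pos_part_sub_lintegral_neg_part
      (hWi.restrict (s := s))
    rw [h] at h2
    have f1 : ∫⁻ ω in s, ENNReal.ofReal (W ω) ∂P ≠ ⊤ :=
      ((setLIntegral_le_lintegral _ _).trans_lt hfinp).ne
    have f2 : ∫⁻ ω in s, ENNReal.ofReal (-W ω) ∂P ≠ ⊤ :=
      ((setLIntegral_le_lintegral _ _).trans_lt hfinm).ne
    exact (ENNReal.toReal_eq_toReal_iff' f1 f2).mp (by linarith)
  haveI hfm₁ : IsFiniteMeasure ν₁ := by
    constructor
    rw [hval₁ Set.univ MeasurableSet.univ, Set.preimage_univ, Measure.restrict_univ]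
    exact hfinp
  haveI hfm₂ : IsFiniteMeasure ν₂ := by
    constructor
    rw [hval₂ Set.univ MeasurableSet.univ, Set.preimage_univ, Measure.restrict_univ]
    exact hfinm
  have hνeq : ν₁ = ν₂ := by
    refine ext_of_generate_finite C hgen hπ (fun D hD => ?_) ?_
    · have hDm : MeasurableSet D := by rw [hgen]; exact MeasurableSpace.measurableSet_generateFrom hD
      rw [hval₁ D hDm, hval₂ D hDm]
      exact hkey _ (hV hDm) (h0 D hD)
    · have huniv' := hkey Set.univ MeasurableSet.univ (by rwa [setIntegral_univ])
      rw [Measure.restrict_univ] at huniv'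
      rw [hval₁ Set.univ MeasurableSet.univ, hval₂ Set.univ MeasurableSet.univ,
        Set.preimage_univ, Measure.restrict_univ]
      exact huniv'
  have hmn₁ : Measurable fun ω => ((W ω).toNNReal : ℝ) := hWm.real_toNNReal.coe_nnreal_real
  have hmn₂ : Measurable fun ω => (((-W ω).toNNReal) : ℝ) := hWm.neg.real_toNNReal.coe_nnreal_real
  have hb₁ : ∀ ω, |((W ω).toNNReal : ℝ) * G (V ω)| ≤ |G (V ω) * W ω| := by
    intro ω
    rw [abs_mul, abs_mul, mul_comm (|G (V ω)|)]
    refine mul_le_mul_of_nonneg_right ?_ (abs_nonneg _)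
    rw [Real.coe_toNNReal', abs_of_nonneg (le_max_right _ _)]
    exact max_le (le_abs_self _) (abs_nonneg _)
  have hb₂ : ∀ ω, |(((-W ω).toNNReal) : ℝ) * G (V ω)| ≤ |G (V ω) * W ω| := by
    intro ω
    rw [abs_mul, abs_mul, mul_comm (|G (V ω)|)]
    refine mul_le_mul_of_nonneg_right ?_ (abs_nonneg _)
    rw [Real.coe_toNNReal', abs_of_nonneg (le_max_right _ _)]
    exact max_le (neg_le_abs _) (abs_nonneg _)
  have hi₁ : Integrable (fun ω => ((W ω).toNNReal : ℝ) * G (V ω)) P := by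
    refine Integrable.mono' hGW.abs ((hmn₁.mul (hG.comp hV)).aestronglyMeasurable) ?_
    filter_upwards with ω
    simpa only [Real.norm_eq_abs] using hb₁ ω
  have hi₂ : Integrable (fun ω => (((-W ω).toNNReal) : ℝ) * G (V ω)) P := by
    refine Integrable.mono' hGW.abs ((hmn₂.mul (hG.comp hV)).aestronglyMeasurable) ?_
    filter_upwards with ω
    simpa only [Real.norm_eq_abs] using hb₂ ω
  have e₁ : ∫ ω, ((W ω).toNNReal : ℝ) * G (V ω) ∂P = ∫ a, G a ∂ν₁ := by
    rw [hν₁, integral_map hV.aemeasurable hG.aestronglyMeasurable,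
      integral_withDensity_eq_integral_smul hWm.real_toNNReal]
    simp [NNReal.smul_def]
  have e₂ : ∫ ω, (((-W ω).toNNReal) : ℝ) * G (V ω) ∂P = ∫ a, G a ∂ν₂ := by
    rw [hν₂, integral_map hV.aemeasurable hG.aestronglyMeasurable,
      integral_withDensity_eq_integral_smul
        (f := fun ω => (-W ω).toNNReal) hWm.neg.real_toNNReal]
    simp [NNReal.smul_def]
  have hsplit : ∀ ω, G (V ω) * W ω
      = ((W ω).toNNReal : ℝ) * G (V ω) - (((-W ω).toNNReal) : ℝ) * G (V ω) := by
    intro ω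
    rw [Real.coe_toNNReal', Real.coe_toNNReal']
    rcases le_total 0 (W ω) with h | h
    · rw [max_eq_left h, max_eq_right (neg_nonpos.mpr h)]; ring
    · rw [max_eq_right h, max_eq_left (neg_nonneg.mpr h)]; ring
  calc ∫ ω, G (V ω) * W ω ∂P
      = (∫ ω, ((W ω).toNNReal : ℝ) * G (V ω) ∂P)
        - ∫ ω, (((-W ω).toNNReal) : ℝ) * G (V ω) ∂P := by
        rw [← integral_sub hi₁ hi₂]
        exact integral_congr_ae (Filter.Eventually.of_forall fun ω => hsplit ω)
    _ = (∫ a, G a ∂ν₁) - ∫ a, G a ∂ν₂ := by rw [e₁, e₂]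
    _ = 0 := by rw [hνeq, sub_self]

end DRHelpers
end
open DRHelpers


set_option maxHeartbeats 2000000 in
/-- Population double-robustness identity: the bias of the uncentered
influence function with (possibly misspecified) nuisances `(e₀, r₀, μ̃₀, μ₀)` equals the sum of
the two displayed product-bias terms; in particular it vanishes whenever in each pair of
nuisances at least one is correctly specified. -/
theorem statement11
    {Ω 𝒳 𝒮 : Type*} [MeasurableSpace Ω] [MeasurableSpace 𝒳] [MeasurableSpace 𝒮]
    [StandardBorelSpace 𝒳] [StandardBorelSpace 𝒮]
    (P : Measure Ω) [IsProbabilityMeasure P]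
    -- the random variables of the model
    (X : Ω → 𝒳) (T R : Ω → ℝ) (S0 S1 : Ω → 𝒮) (Y0 Y1 : Ω → ℝ)
    (hX : Measurable X) (hT : Measurable T) (hR : Measurable R)
    (hS0 : Measurable S0) (hS1 : Measurable S1)
    (hY0 : Measurable Y0) (hY1 : Measurable Y1)
    (hT01 : ∀ ω, T ω = 0 ∨ T ω = 1) (hR01 : ∀ ω, R ω = 0 ∨ R ω = 1)
    -- the treatment propensity e* (note that E[T|σ(X)] = P(T=1|σ(X)))
    (e : 𝒳 → ℝ) (he : Measurable e) (heRange : ∀ x, e x ∈ Set.Icc (0 : ℝ) 1)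
    (heSpec : (fun ω => e (X ω)) =ᵐ[P] P[T|mX X])
    -- the labeling propensity r* (note that E[R|σ(T,X,S)] = P(R=1|σ(T,X,S)))
    (r : ℝ → 𝒳 → 𝒮 → ℝ) (hr : Measurable fun p : ℝ × 𝒳 × 𝒮 => r p.1 p.2.1 p.2.2)
    (hrRange : ∀ t x s, r t x s ∈ Set.Icc (0 : ℝ) 1)
    (hrSpec : (fun ω => r (T ω) (X ω) (obs T S0 S1 ω)) =ᵐ[P] P[R|m3 T X (obs T S0 S1)])
    -- Assumption 1 (unconfoundedness)
    (h1i : ∀ t : ℝ, t = 0 ∨ t = 1 →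
      CondIndepBdd P (mX X) (fun ω => (pot Y0 Y1 t ω, pot S0 S1 t ω)) T)
    (h1ii : ∀ t : ℝ, t = 0 ∨ t = 1 → ∀ g : ℝ → ℝ, Measurable g → Bdd g →
      ∀ᵐ ω ∂P, T ω = t →
        (P[fun ω' => R ω' * g (pot Y0 Y1 t ω')|m3 X T (pot S0 S1 t)]) ω
          = (P[R|m3 X T (pot S0 S1 t)]) ω
            * (P[fun ω' => g (pot Y0 Y1 t ω')|m3 X T (pot S0 S1 t)]) ω)
    -- Assumption 2 (strict overlap)
    (ε : ℝ) (hε0 : 0 < ε) (hε : ε < 1 / 2)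
    (h2e : ∀ᵐ ω ∂P, ε ≤ e (X ω) ∧ e (X ω) ≤ 1 - ε)
    (h2r : ∀ t : ℝ, t = 0 ∨ t = 1 → ∀ᵐ ω ∂P, ε ≤ r t (X ω) (pot S0 S1 t ω))
    -- the outcome regressions μ̃* and μ*
    (mt : ℝ → 𝒳 → 𝒮 → ℝ) (hmt : Measurable fun p : ℝ × 𝒳 × 𝒮 => mt p.1 p.2.1 p.2.2)
    (hmtSpec : ∀ t : ℝ, t = 0 ∨ t = 1 →
      (fun ω => mt t (X ω) (pot S0 S1 t ω)) =ᵐ[P] P[pot Y0 Y1 t|m2 X (pot S0 S1 t)])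
    (mu : ℝ → 𝒳 → ℝ) (hmu : Measurable fun p : ℝ × 𝒳 => mu p.1 p.2)
    (hmuSpec : ∀ t : ℝ, t = 0 ∨ t = 1 →
      (fun ω => mu t (X ω)) =ᵐ[P] P[pot Y0 Y1 t|mX X])
    -- the (possibly misspecified) nuisances
    (e0 : 𝒳 → ℝ) (he0 : Measurable e0) (he0Range : ∀ x, e0 x ∈ Set.Icc ε (1 - ε))
    (r0 : ℝ → 𝒳 → 𝒮 → ℝ) (hr0 : Measurable fun p : ℝ × 𝒳 × 𝒮 => r0 p.1 p.2.1 p.2.2)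
    (hr0Range : ∀ t x s, r0 t x s ∈ Set.Icc ε 1)
    (mu0 : ℝ → 𝒳 → ℝ) (hmu0 : Measurable fun p : ℝ × 𝒳 => mu0 p.1 p.2)
    (mt0 : ℝ → 𝒳 → 𝒮 → ℝ) (hmt0 : Measurable fun p : ℝ × 𝒳 × 𝒮 => mt0 p.1 p.2.1 p.2.2)
    -- integrability
    (hint1 : Integrable Y1 P)
    (hint2 : Integrable (fun ω => mt0 1 (X ω) (S1 ω)) P)
    (hint3 : Integrable (fun ω => mu0 1 (X ω)) P)
    (hint4 : Integrable (fun ω => mt 1 (X ω) (S1 ω)) P)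
    (hint5 : Integrable (fun ω => mu 1 (X ω)) P) :
    ((∫ ω, mu0 1 (X ω)
          + T ω * R ω / (e0 (X ω) * r0 1 (X ω) (obs T S0 S1 ω))
            * (obs T Y0 Y1 ω - mt0 1 (X ω) (obs T S0 S1 ω))
          + T ω / e0 (X ω) * (mt0 1 (X ω) (obs T S0 S1 ω) - mu0 1 (X ω)) ∂P)
        - ∫ ω, Y1 ω ∂P
      = (∫ ω, e (X ω) * (r 1 (X ω) (S1 ω) - r0 1 (X ω) (S1 ω))
            / (e0 (X ω) * r0 1 (X ω) (S1 ω))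
            * (mt 1 (X ω) (S1 ω) - mt0 1 (X ω) (S1 ω)) ∂P)
        + ∫ ω, (e (X ω) - e0 (X ω)) / e0 (X ω) * (mu 1 (X ω) - mu0 1 (X ω)) ∂P)
    ∧ ((∀ᵐ ω ∂P,
          (mt0 1 (X ω) (S1 ω) - mt 1 (X ω) (S1 ω))
            * (r0 1 (X ω) (S1 ω) - r 1 (X ω) (S1 ω)) = 0) →
        (∀ᵐ ω ∂P, (mu0 1 (X ω) - mu 1 (X ω)) * (e0 (X ω) - e (X ω)) = 0) →
        (∫ ω, mu0 1 (X ω)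
            + T ω * R ω / (e0 (X ω) * r0 1 (X ω) (obs T S0 S1 ω))
              * (obs T Y0 Y1 ω - mt0 1 (X ω) (obs T S0 S1 ω))
            + T ω / e0 (X ω) * (mt0 1 (X ω) (obs T S0 S1 ω) - mu0 1 (X ω)) ∂P)
          = ∫ ω, Y1 ω ∂P) := by
  classical
  -- basic reductions
  have hpotS : pot S0 S1 (1:ℝ) = S1 := if_pos rfl
  have hpotY : pot Y0 Y1 (1:ℝ) = Y1 := if_pos rfl
  have hobs : Measurable (obs T S0 S1) :=
    Measurable.ite (hT (measurableSet_singleton 1)) hS1 hS0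
  -- measurability of composite functions
  have hXS1 : Measurable fun ω => (X ω, S1 ω) := hX.prodMk hS1
  have hV3 : Measurable fun ω => (X ω, T ω, S1 ω) := hX.prodMk (hT.prodMk hS1)
  have hVY : Measurable fun ω => (X ω, Y1 ω, S1 ω) := hX.prodMk (hY1.prodMk hS1)
  have hVo : Measurable fun ω => (T ω, X ω, obs T S0 S1 ω) := hT.prodMk (hX.prodMk hobs)
  have hr1m : Measurable fun ω => r 1 (X ω) (S1 ω) := hr.comp (measurable_const.prodMk hXS1)
  have hr01m : Measurable fun ω => r0 1 (X ω) (S1 ω) := hr0.comp (measurable_const.prodMk hXS1)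
  have hmtm : Measurable fun ω => mt 1 (X ω) (S1 ω) := hmt.comp (measurable_const.prodMk hXS1)
  have hmt0m : Measurable fun ω => mt0 1 (X ω) (S1 ω) := hmt0.comp (measurable_const.prodMk hXS1)
  have hmum : Measurable fun ω => mu 1 (X ω) := hmu.comp (measurable_const.prodMk hX)
  have hmu0m : Measurable fun ω => mu0 1 (X ω) := hmu0.comp (measurable_const.prodMk hX)
  have heXm : Measurable fun ω => e (X ω) := he.comp hX
  have he0Xm : Measurable fun ω => e0 (X ω) := he0.comp hX
  have hφm : Measurable fun ω => (e0 (X ω) * r0 1 (X ω) (S1 ω))⁻¹ := (he0Xm.mul hr01m).inv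
  -- bounds
  have hTb : ∀ ω, |T ω| ≤ 1 := fun ω => by rcases hT01 ω with h | h <;> simp [h]
  have hRb : ∀ ω, |R ω| ≤ 1 := fun ω => by rcases hR01 ω with h | h <;> simp [h]
  have hT0le : ∀ ω, 0 ≤ T ω := fun ω => by rcases hT01 ω with h | h <;> simp [h]
  have hR0le : ∀ ω, 0 ≤ R ω := fun ω => by rcases hR01 ω with h | h <;> simp [h]
  have hR1le : ∀ ω, R ω ≤ 1 := fun ω => by rcases hR01 ω with h | h <;> simp [h]
  have heb : ∀ x, |e x| ≤ 1 := fun x => abs_le.mpr ⟨by linarith [(heRange x).1], (heRange x).2⟩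
  have hε0' : (0:ℝ) < ε := hε0
  have he0pos : ∀ x, 0 < e0 x := fun x => lt_of_lt_of_le hε0 (he0Range x).1
  have hr0pos : ∀ t x s, 0 < r0 t x s := fun t x s => lt_of_lt_of_le hε0 (hr0Range t x s).1
  have hden_pos : ∀ ω, 0 < e0 (X ω) * r0 1 (X ω) (S1 ω) :=
    fun ω => mul_pos (he0pos _) (hr0pos _ _ _)
  have hφb : ∀ ω, |(e0 (X ω) * r0 1 (X ω) (S1 ω))⁻¹| ≤ (ε*ε)⁻¹ := by
    intro ω
    rw [abs_of_nonneg (inv_nonneg.mpr (hden_pos ω).le)]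
    refine inv_anti₀ (mul_pos hε0 hε0) ?_
    exact mul_le_mul (he0Range _).1 (hr0Range _ _ _).1 hε0.le (he0pos _).le
  have hqIb : ∀ ω, |e (X ω) * (e0 (X ω))⁻¹| ≤ ε⁻¹ := by
    intro ω
    rw [abs_mul, abs_of_nonneg (inv_nonneg.mpr (he0pos _).le)]
    calc |e (X ω)| * (e0 (X ω))⁻¹ ≤ 1 * ε⁻¹ := by
          exact mul_le_mul (heb _) (inv_anti₀ hε0 (he0Range _).1)
            (inv_nonneg.mpr (he0pos _).le) zero_le_one
      _ = ε⁻¹ := one_mul _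
  -- sub-σ-algebras
  have hmx_le : mX X ≤ ‹MeasurableSpace Ω› := hX.comap_le
  have hm2_le : m2 X S1 ≤ ‹MeasurableSpace Ω› := hXS1.comap_le
  have hm1_le : m3 X T S1 ≤ ‹MeasurableSpace Ω› := hV3.comap_le
  have hmo_le : m3 T X (obs T S0 S1) ≤ ‹MeasurableSpace Ω› := hVo.comap_le
  have hmxm : @Measurable Ω 𝒳 (mX X) _ X := fun s hs => ⟨s, hs, rfl⟩
  have hm2m : @Measurable Ω (𝒳 × 𝒮) (m2 X S1) _ (fun ω => (X ω, S1 ω)) := fun s hs => ⟨s, hs, rfl⟩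
  have hm1m : @Measurable Ω (𝒳 × ℝ × 𝒮) (m3 X T S1) _ (fun ω => (X ω, T ω, S1 ω)) :=
    fun s hs => ⟨s, hs, rfl⟩
  have hmom : @Measurable Ω (ℝ × 𝒳 × 𝒮) (m3 T X (obs T S0 S1)) _
      (fun ω => (T ω, X ω, obs T S0 S1 ω)) := fun s hs => ⟨s, hs, rfl⟩
  have hSMx : ∀ {g : 𝒳 → ℝ}, Measurable g → StronglyMeasurable[mX X] fun ω => g (X ω) :=
    fun hg => (hg.comp hmxm).stronglyMeasurable
  have hSM2 : ∀ {g : 𝒳 × 𝒮 → ℝ}, Measurable g →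
      StronglyMeasurable[m2 X S1] fun ω => g (X ω, S1 ω) :=
    fun hg => (hg.comp hm2m).stronglyMeasurable
  have hSM1 : ∀ {g : 𝒳 × ℝ × 𝒮 → ℝ}, Measurable g →
      StronglyMeasurable[m3 X T S1] fun ω => g (X ω, T ω, S1 ω) :=
    fun hg => (hg.comp hm1m).stronglyMeasurable
  have hSMo : ∀ {g : ℝ × 𝒳 × 𝒮 → ℝ}, Measurable g →
      StronglyMeasurable[m3 T X (obs T S0 S1)] fun ω => g (T ω, X ω, obs T S0 S1 ω) :=
    fun hg => (hg.comp hmom).stronglyMeasurable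
  -- rewritten hypotheses at t = 1
  have h1i' : CondIndepBdd P (mX X) (fun ω => (Y1 ω, S1 ω)) T := by
    have h := h1i 1 (Or.inr rfl); simpa only [hpotY, hpotS] using h
  have h1ii' : ∀ g : ℝ → ℝ, Measurable g → Bdd g →
      ∀ᵐ ω ∂P, T ω = 1 →
        (P[fun ω' => R ω' * g (Y1 ω')|m3 X T S1]) ω
          = (P[R|m3 X T S1]) ω * (P[fun ω' => g (Y1 ω')|m3 X T S1]) ω := by
    intro g hg hgb
    have h := h1ii 1 (Or.inr rfl) g hg hgb; simpa only [hpotY, hpotS] using h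
  have hmt1 : (fun ω => mt 1 (X ω) (S1 ω)) =ᵐ[P] P[Y1|m2 X S1] := by
    have h := hmtSpec 1 (Or.inr rfl); simpa only [hpotY, hpotS] using h
  have hmu1 : (fun ω => mu 1 (X ω)) =ᵐ[P] P[Y1|mX X] := by
    have h := hmuSpec 1 (Or.inr rfl); simpa only [hpotY, hpotS] using h
  -- generating π-system for 𝒳 × ℝ × 𝒮
  have hgen3 : (inferInstance : MeasurableSpace (𝒳 × ℝ × 𝒮))
      = MeasurableSpace.generateFrom (Set.image2 (· ×ˢ ·) {A : Set 𝒳 | MeasurableSet A}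
          (Set.image2 (· ×ˢ ·) {B : Set ℝ | MeasurableSet B} {C : Set 𝒮 | MeasurableSet C})) := by
    refine (generateFrom_eq_prod MeasurableSpace.generateFrom_measurableSet generateFrom_prod
      isCountablySpanning_measurableSet ?_).symm
    refine ⟨fun _ => Set.univ ×ˢ Set.univ, fun _ => ?_, by simp [Set.iUnion_const]⟩
    exact Set.mem_image2_of_mem (Set.mem_setOf_eq ▸ MeasurableSet.univ) (Set.mem_setOf_eq ▸ MeasurableSet.univ)
  have hπ3 : IsPiSystem (Set.image2 (· ×ˢ ·) {A : Set 𝒳 | MeasurableSet A}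
      (Set.image2 (· ×ˢ ·) {B : Set ℝ | MeasurableSet B} {C : Set 𝒮 | MeasurableSet C})) :=
    MeasurableSpace.isPiSystem_measurableSet.prod (MeasurableSpace.isPiSystem_measurableSet.prod MeasurableSpace.isPiSystem_measurableSet)
  -- swap lemmas against conditional expectations
  have hswap2 : ∀ g : 𝒳 × 𝒮 → ℝ, Measurable g → (∀ p, |g p| ≤ (ε*ε)⁻¹) →
      ∫ ω, g (X ω, S1 ω) * Y1 ω ∂P = ∫ ω, g (X ω, S1 ω) * mt 1 (X ω) (S1 ω) ∂P := by
    intro g hg hgb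
    have hKm : Measurable fun ω => g (X ω, S1 ω) := hg.comp hXS1
    have h1 : Integrable (fun ω => g (X ω, S1 ω) * Y1 ω) P :=
      bdd_mul_int hKm hY1 hint1 (fun ω => hgb _)
    rw [integral_mul_condexp hm2_le (hSM2 hg) hint1 h1]
    refine integral_congr_ae ?_
    filter_upwards [hmt1] with ω h
    rw [← h]
  have hswapX : ∀ g : 𝒳 → ℝ, Measurable g → (∀ x, |g x| ≤ (ε*ε)⁻¹) →
      ∫ ω, g (X ω) * Y1 ω ∂P = ∫ ω, g (X ω) * mu 1 (X ω) ∂P := by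
    intro g hg hgb
    have hKm : Measurable fun ω => g (X ω) := hg.comp hX
    have h1 : Integrable (fun ω => g (X ω) * Y1 ω) P :=
      bdd_mul_int hKm hY1 hint1 (fun ω => hgb _)
    rw [integral_mul_condexp hmx_le (hSMx hg) hint1 h1]
    refine integral_congr_ae ?_
    filter_upwards [hmu1] with ω h
    rw [← h]
  have hEY1 : ∫ ω, Y1 ω ∂P = ∫ ω, mu 1 (X ω) ∂P := by
    rw [← integral_condExp (μ := P) (f := Y1) hmx_le]
    exact (integral_congr_ae hmu1).symm
  -- L1 : replace T by e(X) against integrable functions of (X, Y1, S1)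
  have hL1 : ∀ G : 𝒳 × ℝ × 𝒮 → ℝ, Measurable G →
      Integrable (fun ω => G (X ω, Y1 ω, S1 ω)) P →
      ∫ ω, T ω * G (X ω, Y1 ω, S1 ω) ∂P = ∫ ω, e (X ω) * G (X ω, Y1 ω, S1 ω) ∂P := by
    intro G hG hGi
    have hWm : Measurable fun ω => T ω - e (X ω) := hT.sub heXm
    have hWb : ∀ ω, |T ω - e (X ω)| ≤ 2 := fun ω => by
      have h1 := hTb ω; have h2 := heb (X ω)
      calc |T ω - e (X ω)| ≤ |T ω| + |e (X ω)| := abs_sub _ _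
        _ ≤ 2 := by linarith
    have hWi : Integrable (fun ω => T ω - e (X ω)) P := int_of_bdd hWm hWb
    have hTint : Integrable T P := int_of_bdd hT hTb
    have heint : Integrable (fun ω => e (X ω)) P := int_of_bdd heXm (fun ω => heb _)
    have huniv0 : ∫ ω, (T ω - e (X ω)) ∂P = 0 := by
      have h1 : ∫ ω, T ω ∂P = ∫ ω, e (X ω) ∂P := by
        rw [← integral_condExp (μ := P) (f := T) hmx_le]
        exact (integral_congr_ae heSpec).symm
      rw [integral_sub hTint heint, h1, sub_self]
    have h0 : ∀ D ∈ (Set.image2 (· ×ˢ ·) {A : Set 𝒳 | MeasurableSet A}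
        (Set.image2 (· ×ˢ ·) {B : Set ℝ | MeasurableSet B} {C : Set 𝒮 | MeasurableSet C})),
        ∫ ω in (fun ω => (X ω, Y1 ω, S1 ω)) ⁻¹' D, (T ω - e (X ω)) ∂P = 0 := by
      intro D hD
      obtain ⟨A, hA, E, hE, rfl⟩ := hD
      obtain ⟨B, hB, Cs, hCs, rfl⟩ := hE
      have hA' : MeasurableSet A := hA
      have hB' : MeasurableSet B := hB
      have hCs' : MeasurableSet Cs := hCs
      have hDm : MeasurableSet (A ×ˢ B ×ˢ Cs) := hA'.prod (hB'.prod hCs')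
      set f : ℝ × 𝒮 → ℝ :=
        fun p => (if p.1 ∈ B then (1:ℝ) else 0) * (if p.2 ∈ Cs then (1:ℝ) else 0) with hf_def
      set gT : ℝ → ℝ := fun t => if t = 1 then (1:ℝ) else 0 with hg_def
      have hfm : Measurable f :=
        (Measurable.ite (measurable_fst hB') measurable_const measurable_const).mul
          (Measurable.ite (measurable_snd hCs') measurable_const measurable_const)
      have hfb : ∀ p, |f p| ≤ 1 := fun p => by
        by_cases h1 : p.1 ∈ B <;> by_cases h2 : p.2 ∈ Cs <;> simp [hf_def, h1, h2]
      have hgm : Measurable gT :=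
        Measurable.ite (measurableSet_eq) measurable_const measurable_const
      have hgb : Bdd gT := ⟨1, fun t => by by_cases h : t = 1 <;> simp [hg_def, h]⟩
      have hgT : ∀ ω, gT (T ω) = T ω := fun ω => by
        rcases hT01 ω with h | h <;> simp [hg_def, h]
      set iA : 𝒳 → ℝ := fun x => if x ∈ A then (1:ℝ) else 0 with hiA_def
      have hiAm : Measurable iA := Measurable.ite hA' measurable_const measurable_const
      have hiAb : ∀ x, |iA x| ≤ 1 := fun x => by by_cases h : x ∈ A <;> simp [hiA_def, h]
      have hfUm : Measurable fun ω => f (Y1 ω, S1 ω) := hfm.comp (hY1.prodMk hS1)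
      have hZm : Measurable fun ω => f (Y1 ω, S1 ω) * gT (T ω) := hfUm.mul (hgm.comp hT)
      have hgTb : ∀ t, |gT t| ≤ 1 := fun t => by by_cases h : t = 1 <;> simp [hg_def, h]
      have hZb : ∀ ω, |f (Y1 ω, S1 ω) * gT (T ω)| ≤ 1 := fun ω => by
        rw [abs_mul]
        calc |f (Y1 ω, S1 ω)| * |gT (T ω)| ≤ 1 * 1 :=
              mul_le_mul (hfb _) (hgTb _) (abs_nonneg _) zero_le_one
          _ = 1 := one_mul _
      have hZi : Integrable (fun ω => f (Y1 ω, S1 ω) * gT (T ω)) P := int_of_bdd hZm hZb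
      have hiAeb : ∀ x, |iA x * e x| ≤ 1 := fun x => by
        rw [abs_mul]
        calc |iA x| * |e x| ≤ 1 * 1 := mul_le_mul (hiAb _) (heb _) (abs_nonneg _) zero_le_one
          _ = 1 := one_mul _
      have hfUi : Integrable (fun ω => f (Y1 ω, S1 ω)) P := int_of_bdd hfUm (fun ω => hfb _)
      have key0 : ∫ ω, iA (X ω) * (f (Y1 ω, S1 ω) * gT (T ω)) ∂P
          = ∫ ω, (iA (X ω) * e (X ω)) * f (Y1 ω, S1 ω) ∂P := by
        rw [integral_mul_condexp hmx_le (hSMx hiAm) hZi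
          (bdd_mul_int (hiAm.comp hX) hZm hZi (fun ω => hiAb _))]
        have hci := h1i' f hfm ⟨1, hfb⟩ gT hgm hgb
        have hgTfun : (fun ω => gT (T ω)) = T := funext hgT
        calc ∫ ω, iA (X ω) * (P[fun ω' => f (Y1 ω', S1 ω') * gT (T ω')|mX X]) ω ∂P
            = ∫ ω, iA (X ω)
                * ((P[fun ω' => f (Y1 ω', S1 ω')|mX X]) ω * (P[T|mX X]) ω) ∂P := by
              refine integral_congr_ae ?_
              filter_upwards [hci] with ω h
              rw [h, hgTfun]
          _ = ∫ ω, (iA (X ω) * e (X ω)) * (P[fun ω' => f (Y1 ω', S1 ω')|mX X]) ω ∂P := by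
              refine integral_congr_ae ?_
              filter_upwards [heSpec] with ω h
              rw [← h]; ring
          _ = ∫ ω, (iA (X ω) * e (X ω)) * f (Y1 ω, S1 ω) ∂P := by
              refine (integral_mul_condexp hmx_le (hSMx (hiAm.mul he)) hfUi ?_).symm
              exact bdd_mul_int ((hiAm.mul he).comp hX) hfUm hfUi (fun ω => hiAeb _)
      have hindEq : ∀ ω, Set.indicator ((fun ω => (X ω, Y1 ω, S1 ω)) ⁻¹' (A ×ˢ B ×ˢ Cs))
          (fun ω => T ω - e (X ω)) ω
          = iA (X ω) * (f (Y1 ω, S1 ω) * gT (T ω)) - (iA (X ω) * e (X ω)) * f (Y1 ω, S1 ω) := by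
        intro ω
        rw [Set.indicator_apply]
        by_cases h1 : X ω ∈ A <;> by_cases h2 : Y1 ω ∈ B <;> by_cases h3 : S1 ω ∈ Cs <;>
          simp [hiA_def, hf_def, h1, h2, h3, hgT ω, Set.mem_prod] <;> ring_nf
      have hint1' : Integrable (fun ω => iA (X ω) * (f (Y1 ω, S1 ω) * gT (T ω))) P :=
        bdd_mul_int (hiAm.comp hX) hZm hZi (fun ω => hiAb _)
      have hint2' : Integrable (fun ω => (iA (X ω) * e (X ω)) * f (Y1 ω, S1 ω)) P :=
        bdd_mul_int ((hiAm.mul he).comp hX) hfUm hfUi (fun ω => hiAeb _)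
      calc ∫ ω in (fun ω => (X ω, Y1 ω, S1 ω)) ⁻¹' (A ×ˢ B ×ˢ Cs), (T ω - e (X ω)) ∂P
          = ∫ ω, Set.indicator ((fun ω => (X ω, Y1 ω, S1 ω)) ⁻¹' (A ×ˢ B ×ˢ Cs))
              (fun ω => T ω - e (X ω)) ω ∂P := (integral_indicator (hVY hDm)).symm
        _ = ∫ ω, (iA (X ω) * (f (Y1 ω, S1 ω) * gT (T ω))
              - (iA (X ω) * e (X ω)) * f (Y1 ω, S1 ω)) ∂P :=
            integral_congr_ae (Filter.Eventually.of_forall hindEq)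
        _ = 0 := by rw [integral_sub hint1' hint2', key0, sub_self]
    have hGW : Integrable (fun ω => G (X ω, Y1 ω, S1 ω) * (T ω - e (X ω))) P :=
      (bdd_mul_int hWm (hG.comp hVY) hGi hWb).congr
        (Filter.Eventually.of_forall fun ω => mul_comm _ _)
    have hcore := integral_weight_mul_eq_zero (P := P) hVY hWm hWi hgen3 hπ3 h0 huniv0 hG hGW
    have hTG : Integrable (fun ω => T ω * G (X ω, Y1 ω, S1 ω)) P :=
      bdd_mul_int hT (hG.comp hVY) hGi hTb
    have heG : Integrable (fun ω => e (X ω) * G (X ω, Y1 ω, S1 ω)) P :=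
      bdd_mul_int heXm (hG.comp hVY) hGi (fun ω => heb _)
    have hz : ∫ ω, (T ω * G (X ω, Y1 ω, S1 ω) - e (X ω) * G (X ω, Y1 ω, S1 ω)) ∂P = 0 := by
      rw [← hcore]
      exact integral_congr_ae (Filter.Eventually.of_forall fun ω => by ring)
    rw [integral_sub hTG heG] at hz
    linarith
  -- L2 : replace R by r(T,X,S) against integrable functions of (T, X, S)
  have hL2 : ∀ G : ℝ × 𝒳 × 𝒮 → ℝ, Measurable G →
      Integrable (fun ω => G (T ω, X ω, obs T S0 S1 ω)) P →
      ∫ ω, G (T ω, X ω, obs T S0 S1 ω) * R ω ∂P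
        = ∫ ω, G (T ω, X ω, obs T S0 S1 ω) * r (T ω) (X ω) (obs T S0 S1 ω) ∂P := by
    intro G hG hGi
    have hRint : Integrable R P := int_of_bdd hR hRb
    have hKR : Integrable (fun ω => G (T ω, X ω, obs T S0 S1 ω) * R ω) P := by
      refine Integrable.mono' hGi.abs (((hG.comp hVo).mul hR).aestronglyMeasurable) ?_
      filter_upwards with ω
      rw [Real.norm_eq_abs, abs_mul]
      have := mul_le_mul_of_nonneg_left (hRb ω) (abs_nonneg (G (T ω, X ω, obs T S0 S1 ω)))
      simpa using this
    rw [integral_mul_condexp hmo_le (hSMo hG) hRint hKR]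
    refine integral_congr_ae ?_
    filter_upwards [hrSpec] with ω h
    rw [← h]
  -- identification of E[Y1 | σ(X,T,S1)]
  have h1le : (1:ℝ) ≤ (ε*ε)⁻¹ := by
    rw [le_inv_comm₀ (by positivity) (by positivity)]
    nlinarith
  have hY1m1 : (fun ω => mt 1 (X ω) (S1 ω)) =ᵐ[P] P[Y1|m3 X T S1] := by
    have hW3m : Measurable fun ω => mt 1 (X ω) (S1 ω) - Y1 ω := hmtm.sub hY1
    have hW3i : Integrable (fun ω => mt 1 (X ω) (S1 ω) - Y1 ω) P := hint4.sub hint1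
    have hY1mt : ∫ ω, Y1 ω ∂P = ∫ ω, mt 1 (X ω) (S1 ω) ∂P := by
      rw [← integral_condExp (μ := P) (f := Y1) hm2_le]
      exact (integral_congr_ae hmt1).symm
    have huniv3 : ∫ ω, (mt 1 (X ω) (S1 ω) - Y1 ω) ∂P = 0 := by
      rw [integral_sub hint4 hint1, hY1mt, sub_self]
    have h03 : ∀ D ∈ (Set.image2 (· ×ˢ ·) {A : Set 𝒳 | MeasurableSet A}
        (Set.image2 (· ×ˢ ·) {B : Set ℝ | MeasurableSet B} {C : Set 𝒮 | MeasurableSet C})),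
        ∫ ω in (fun ω => (X ω, T ω, S1 ω)) ⁻¹' D, (mt 1 (X ω) (S1 ω) - Y1 ω) ∂P = 0 := by
      intro D hD
      obtain ⟨A, hA, E, hE, rfl⟩ := hD
      obtain ⟨B, hB, Cs, hCs, rfl⟩ := hE
      have hA' : MeasurableSet A := hA
      have hB' : MeasurableSet B := hB
      have hCs' : MeasurableSet Cs := hCs
      have hDm : MeasurableSet (A ×ˢ B ×ˢ Cs) := hA'.prod (hB'.prod hCs')
      set iA : 𝒳 → ℝ := fun x => if x ∈ A then (1:ℝ) else 0 with hiA_def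
      set iB : ℝ → ℝ := fun t => if t ∈ B then (1:ℝ) else 0 with hiB_def
      set iC : 𝒮 → ℝ := fun s => if s ∈ Cs then (1:ℝ) else 0 with hiC_def
      have hiAm : Measurable iA := Measurable.ite hA' measurable_const measurable_const
      have hiCm : Measurable iC := Measurable.ite hCs' measurable_const measurable_const
      have hiAb : ∀ x, |iA x| ≤ 1 := fun x => by by_cases h : x ∈ A <;> simp [hiA_def, h]
      have hiCb : ∀ x, |iC x| ≤ 1 := fun x => by by_cases h : x ∈ Cs <;> simp [hiC_def, h]
      have hACb : ∀ (x : 𝒳) (sc : 𝒮), |iA x * iC sc| ≤ (ε*ε)⁻¹ := fun x sc => by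
        rw [abs_mul]
        calc |iA x| * |iC sc| ≤ 1 * 1 :=
              mul_le_mul (hiAb _) (hiCb _) (abs_nonneg _) zero_le_one
          _ ≤ (ε*ε)⁻¹ := by rw [one_mul]; exact h1le
      have heACb : ∀ (x : 𝒳) (sc : 𝒮), |e x * (iA x * iC sc)| ≤ (ε*ε)⁻¹ := fun x sc => by
        rw [abs_mul]
        calc |e x| * |iA x * iC sc| ≤ 1 * 1 := by
              refine mul_le_mul (heb _) ?_ (abs_nonneg _) zero_le_one
              rw [abs_mul]
              calc |iA x| * |iC sc| ≤ 1 * 1 :=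
                    mul_le_mul (hiAb _) (hiCb _) (abs_nonneg _) zero_le_one
                _ = 1 := one_mul _
          _ ≤ (ε*ε)⁻¹ := by rw [one_mul]; exact h1le
      have hACm : Measurable fun ω => iA (X ω) * iC (S1 ω) := (hiAm.comp hX).mul (hiCm.comp hS1)
      have hintACmt : Integrable (fun ω => (iA (X ω) * iC (S1 ω)) * mt 1 (X ω) (S1 ω)) P :=
        bdd_mul_int hACm hmtm hint4 (fun ω => hACb _ _)
      have hintACY : Integrable (fun ω => (iA (X ω) * iC (S1 ω)) * Y1 ω) P :=
        bdd_mul_int hACm hY1 hint1 (fun ω => hACb _ _)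
      -- z1 : the part without T vanishes
      have z1 : ∫ ω, (iA (X ω) * iC (S1 ω)) * (mt 1 (X ω) (S1 ω) - Y1 ω) ∂P = 0 := by
        have hsw := hswap2 (fun p => iA p.1 * iC p.2)
          ((hiAm.comp measurable_fst).mul (hiCm.comp measurable_snd)) (fun p => hACb _ _)
        have : ∫ ω, (iA (X ω) * iC (S1 ω)) * (mt 1 (X ω) (S1 ω) - Y1 ω) ∂P
            = (∫ ω, (iA (X ω) * iC (S1 ω)) * mt 1 (X ω) (S1 ω) ∂P)
              - ∫ ω, (iA (X ω) * iC (S1 ω)) * Y1 ω ∂P := by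
          rw [← integral_sub hintACmt hintACY]
          exact integral_congr_ae (Filter.Eventually.of_forall fun ω => by ring)
        rw [this, ← hsw, sub_self]
      -- z2 : the T part vanishes
      have z2 : ∫ ω, T ω * ((iA (X ω) * iC (S1 ω)) * (mt 1 (X ω) (S1 ω) - Y1 ω)) ∂P = 0 := by
        have hG3m : Measurable fun p : 𝒳 × ℝ × 𝒮 =>
            (iA p.1 * iC p.2.2) * (mt 1 p.1 p.2.2 - p.2.1) :=
          ((hiAm.comp measurable_fst).mul (hiCm.comp (measurable_snd.comp measurable_snd))).mul
            ((hmt.comp (measurable_const.prodMk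
              (measurable_fst.prodMk (measurable_snd.comp measurable_snd)))).sub
              (measurable_fst.comp measurable_snd))
        have hG3i : Integrable (fun ω => (iA (X ω) * iC (S1 ω))
            * (mt 1 (X ω) (S1 ω) - Y1 ω)) P :=
          bdd_mul_int hACm hW3m hW3i (fun ω => hACb _ _)
        have h := hL1 (fun p => (iA p.1 * iC p.2.2) * (mt 1 p.1 p.2.2 - p.2.1)) hG3m hG3i
        rw [h]
        have hsw := hswap2 (fun p => e p.1 * (iA p.1 * iC p.2))
          ((he.comp measurable_fst).mul
            ((hiAm.comp measurable_fst).mul (hiCm.comp measurable_snd))) (fun p => heACb _ _)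
        have hintE1 : Integrable (fun ω => (e (X ω) * (iA (X ω) * iC (S1 ω)))
            * mt 1 (X ω) (S1 ω)) P :=
          bdd_mul_int (heXm.mul hACm) hmtm hint4 (fun ω => heACb _ _)
        have hintE2 : Integrable (fun ω => (e (X ω) * (iA (X ω) * iC (S1 ω))) * Y1 ω) P :=
          bdd_mul_int (heXm.mul hACm) hY1 hint1 (fun ω => heACb _ _)
        have : ∫ ω, e (X ω) * ((iA (X ω) * iC (S1 ω)) * (mt 1 (X ω) (S1 ω) - Y1 ω)) ∂P
            = (∫ ω, (e (X ω) * (iA (X ω) * iC (S1 ω))) * mt 1 (X ω) (S1 ω) ∂P)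
              - ∫ ω, (e (X ω) * (iA (X ω) * iC (S1 ω))) * Y1 ω ∂P := by
          rw [← integral_sub hintE1 hintE2]
          exact integral_congr_ae (Filter.Eventually.of_forall fun ω => by ring)
        rw [this, ← hsw, sub_self]
      -- assemble the rectangle
      have hiBT : ∀ ω, iB (T ω) = iB 0 + (iB 1 - iB 0) * T ω := fun ω => by
        rcases hT01 ω with h | h <;> rw [h] <;> ring
      have hstep : ∀ ω, Set.indicator ((fun ω => (X ω, T ω, S1 ω)) ⁻¹' (A ×ˢ B ×ˢ Cs))
          (fun ω => mt 1 (X ω) (S1 ω) - Y1 ω) ω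
          = (iA (X ω) * iB (T ω) * iC (S1 ω)) * (mt 1 (X ω) (S1 ω) - Y1 ω) := by
        intro ω
        by_cases h1 : X ω ∈ A <;> by_cases h2 : T ω ∈ B <;> by_cases h3 : S1 ω ∈ Cs <;>
          simp [Set.indicator_apply, Set.mem_preimage, Set.mem_prod, hiA_def, hiB_def,
            hiC_def, h1, h2, h3]
      have hindEq : ∀ ω, Set.indicator ((fun ω => (X ω, T ω, S1 ω)) ⁻¹' (A ×ˢ B ×ˢ Cs))
          (fun ω => mt 1 (X ω) (S1 ω) - Y1 ω) ω
          = iB 0 * ((iA (X ω) * iC (S1 ω)) * (mt 1 (X ω) (S1 ω) - Y1 ω))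
            + (iB 1 - iB 0) * (T ω * ((iA (X ω) * iC (S1 ω)) * (mt 1 (X ω) (S1 ω) - Y1 ω))) := by
        intro ω
        rw [hstep ω, hiBT ω]; ring
      have hintz1 : Integrable (fun ω => (iA (X ω) * iC (S1 ω))
          * (mt 1 (X ω) (S1 ω) - Y1 ω)) P :=
        bdd_mul_int hACm hW3m hW3i (fun ω => hACb _ _)
      have hintz2 : Integrable (fun ω => T ω * ((iA (X ω) * iC (S1 ω))
          * (mt 1 (X ω) (S1 ω) - Y1 ω))) P :=
        bdd_mul_int hT (hACm.mul hW3m) (hintz1.congr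
          (Filter.Eventually.of_forall fun ω => by ring)) hTb
      calc ∫ ω in (fun ω => (X ω, T ω, S1 ω)) ⁻¹' (A ×ˢ B ×ˢ Cs),
            (mt 1 (X ω) (S1 ω) - Y1 ω) ∂P
          = ∫ ω, Set.indicator ((fun ω => (X ω, T ω, S1 ω)) ⁻¹' (A ×ˢ B ×ˢ Cs))
              (fun ω => mt 1 (X ω) (S1 ω) - Y1 ω) ω ∂P := (integral_indicator (hV3 hDm)).symm
        _ = ∫ ω, (iB 0 * ((iA (X ω) * iC (S1 ω)) * (mt 1 (X ω) (S1 ω) - Y1 ω))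
              + (iB 1 - iB 0) * (T ω * ((iA (X ω) * iC (S1 ω))
                * (mt 1 (X ω) (S1 ω) - Y1 ω)))) ∂P :=
            integral_congr_ae (Filter.Eventually.of_forall hindEq)
        _ = iB 0 * ∫ ω, ((iA (X ω) * iC (S1 ω)) * (mt 1 (X ω) (S1 ω) - Y1 ω)) ∂P
              + (iB 1 - iB 0) * ∫ ω, (T ω * ((iA (X ω) * iC (S1 ω))
                * (mt 1 (X ω) (S1 ω) - Y1 ω))) ∂P := by
            rw [integral_add (hintz1.const_mul _) (hintz2.const_mul _),
              integral_const_mul, integral_const_mul]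
        _ = 0 := by rw [z1, z2]; ring
    -- conclude by uniqueness of the conditional expectation
    refine ae_eq_condExp_of_forall_setIntegral_eq hm1_le hint1
      (fun s _ _ => hint4.integrableOn) (fun s hs _ => ?_)
      (StronglyMeasurable.aestronglyMeasurable (hSM1 (hmt.comp (measurable_const.prodMk
        (measurable_fst.prodMk (measurable_snd.comp measurable_snd))))))
    obtain ⟨D, hD, rfl⟩ := hs
    have hz : ∫ ω in (fun ω => (X ω, T ω, S1 ω)) ⁻¹' D, (mt 1 (X ω) (S1 ω) - Y1 ω) ∂P = 0 := by
      have hGm : Measurable fun a : 𝒳 × ℝ × 𝒮 => if a ∈ D then (1:ℝ) else 0 :=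
        Measurable.ite hD measurable_const measurable_const
      have hGb : ∀ a : 𝒳 × ℝ × 𝒮, |if a ∈ D then (1:ℝ) else 0| ≤ 1 := fun a => by
        by_cases h : a ∈ D <;> simp [h]
      have hGW : Integrable (fun ω => (if (X ω, T ω, S1 ω) ∈ D then (1:ℝ) else 0)
          * (mt 1 (X ω) (S1 ω) - Y1 ω)) P :=
        bdd_mul_int (hGm.comp hV3) hW3m hW3i (fun ω => hGb _)
      have hcore := integral_weight_mul_eq_zero (P := P) hV3 hW3m hW3i hgen3 hπ3 h03 huniv3
        hGm hGW
      rw [← hcore, ← integral_indicator (hV3 hD)]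
      refine integral_congr_ae (Filter.Eventually.of_forall fun ω => ?_)
      rw [Set.indicator_apply]
      by_cases h : (X ω, T ω, S1 ω) ∈ D <;> simp [h]
    have h1 := integral_sub (hint4.integrableOn
      (s := (fun ω => (X ω, T ω, S1 ω)) ⁻¹' D)) (hint1.integrableOn)
    rw [show (fun ω => mt 1 (X ω) (S1 ω) - Y1 ω) = fun ω => mt 1 (X ω) (S1 ω) - Y1 ω from rfl]
      at hz
    rw [integral_sub hint4.integrableOn hint1.integrableOn] at hz
    linarith
  -- step c : E[T R φ Y1] = E[T r1 φ Mt]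
  have hAa : ∫ ω, (T ω * (e0 (X ω) * r0 1 (X ω) (S1 ω))⁻¹) * (R ω * Y1 ω) ∂P
      = ∫ ω, (T ω * (e0 (X ω) * r0 1 (X ω) (S1 ω))⁻¹ * mt 1 (X ω) (S1 ω))
          * r 1 (X ω) (S1 ω) ∂P := by
    set Kφ : Ω → ℝ := fun ω => T ω * (e0 (X ω) * r0 1 (X ω) (S1 ω))⁻¹ with hKφ_def
    have hKφm : Measurable Kφ := hT.mul hφm
    have hKφsm : StronglyMeasurable[m3 X T S1] Kφ :=
      hSM1 (g := fun p => p.2.1 * (e0 p.1 * r0 1 p.1 p.2.2)⁻¹)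
        ((measurable_fst.comp measurable_snd).mul
          (((he0.comp measurable_fst).mul (hr0.comp (measurable_const.prodMk
            (measurable_fst.prodMk (measurable_snd.comp measurable_snd))))).inv))
    have hKφb : ∀ ω, |Kφ ω| ≤ (ε*ε)⁻¹ := fun ω => by
      rw [hKφ_def, abs_mul]
      calc |T ω| * |(e0 (X ω) * r0 1 (X ω) (S1 ω))⁻¹| ≤ 1 * (ε*ε)⁻¹ :=
            mul_le_mul (hTb ω) (hφb ω) (abs_nonneg _) zero_le_one
        _ = (ε*ε)⁻¹ := one_mul _
    have hρm : Measurable (P[R|m3 X T S1]) := (stronglyMeasurable_condExp.mono hm1_le).measurable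
    have hρ0 : 0 ≤ᵐ[P] P[R|m3 X T S1] := condExp_nonneg (Filter.Eventually.of_forall hR0le)
    have hρ1 : P[R|m3 X T S1] ≤ᵐ[P] fun _ => (1:ℝ) := by
      have h := condExp_mono (μ := P) (m := m3 X T S1) (int_of_bdd hR hRb)
        (integrable_const (1:ℝ)) (Filter.Eventually.of_forall hR1le)
      rwa [condExp_const hm1_le] at h
    set gn : ℕ → ℝ → ℝ := fun n y => if |y| ≤ (n:ℝ) then y else 0 with hgn_def
    have hgnm : ∀ n, Measurable (gn n) := fun n =>
      Measurable.ite (measurableSet_le continuous_abs.measurable measurable_const)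
        measurable_id measurable_const
    have hgn_absle : ∀ (n : ℕ) (y : ℝ), |gn n y| ≤ |y| := fun n y => by
      by_cases h : |y| ≤ (n:ℝ) <;> simp [hgn_def, h, abs_nonneg]
    have hgn_bd : ∀ (n : ℕ) (y : ℝ), |gn n y| ≤ (n:ℝ) := fun n y => by
      by_cases h : |y| ≤ (n:ℝ) <;> simp [hgn_def, h]
    have hgn_tend : ∀ y : ℝ, Tendsto (fun n : ℕ => gn n y) atTop (𝓝 y) := by
      intro y
      refine tendsto_atTop_of_eventually_const (i₀ := ⌈|y|⌉₊) fun n hn => ?_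
      simp only [hgn_def]
      rw [if_pos ((Nat.le_ceil _).trans (Nat.cast_le.mpr hn))]
    have hKρb : ∀ᵐ ω ∂P, |Kφ ω * (P[R|m3 X T S1]) ω| ≤ (ε*ε)⁻¹ := by
      filter_upwards [hρ0, hρ1] with ω h0 h1
      simp only [Pi.zero_apply] at h0
      rw [abs_mul]
      calc |Kφ ω| * |(P[R|m3 X T S1]) ω| ≤ (ε*ε)⁻¹ * 1 :=
            mul_le_mul (hKφb ω) (abs_le.mpr ⟨by linarith, h1⟩) (abs_nonneg _) (by positivity)
        _ = (ε*ε)⁻¹ := mul_one _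
    have hSn : ∀ n : ℕ, ∫ ω, Kφ ω * (R ω * gn n (Y1 ω)) ∂P
        = ∫ ω, (Kφ ω * (P[R|m3 X T S1]) ω) * gn n (Y1 ω) ∂P := by
      intro n
      have hZm : Measurable fun ω => R ω * gn n (Y1 ω) := hR.mul ((hgnm n).comp hY1)
      have hZb : ∀ ω, |R ω * gn n (Y1 ω)| ≤ (n:ℝ) := fun ω => by
        rw [abs_mul]
        calc |R ω| * |gn n (Y1 ω)| ≤ 1 * (n:ℝ) :=
              mul_le_mul (hRb ω) (hgn_bd n _) (abs_nonneg _) zero_le_one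
          _ = (n:ℝ) := one_mul _
      have hZi : Integrable (fun ω => R ω * gn n (Y1 ω)) P := int_of_bdd hZm hZb
      have hKZi : Integrable (fun ω => Kφ ω * (R ω * gn n (Y1 ω))) P :=
        bdd_mul_int hKφm hZm hZi hKφb
      rw [integral_mul_condexp hm1_le hKφsm hZi hKZi]
      have hgY : Integrable (fun ω => gn n (Y1 ω)) P :=
        int_of_bdd ((hgnm n).comp hY1) (fun ω => hgn_bd n _)
      have step2 : ∫ ω, Kφ ω * (P[fun ω' => R ω' * gn n (Y1 ω')|m3 X T S1]) ω ∂P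
          = ∫ ω, (Kφ ω * (P[R|m3 X T S1]) ω)
              * (P[fun ω' => gn n (Y1 ω')|m3 X T S1]) ω ∂P := by
        refine integral_congr_ae ?_
        filter_upwards [h1ii' (gn n) (hgnm n) ⟨(n:ℝ), fun y => hgn_bd n y⟩] with ω h
        by_cases ht : T ω = 1
        · rw [h ht]; ring
        · have ht0 : T ω = 0 := by
            rcases hT01 ω with h' | h'
            · exact h'
            · exact absurd h' ht
          simp [hKφ_def, ht0]
      rw [step2]
      have hKρsm : StronglyMeasurable[m3 X T S1] fun ω => Kφ ω * (P[R|m3 X T S1]) ω :=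
        hKφsm.mul stronglyMeasurable_condExp
      have hKρZi : Integrable (fun ω => (Kφ ω * (P[R|m3 X T S1]) ω) * gn n (Y1 ω)) P := by
        refine Integrable.mono' (integrable_const ((ε*ε)⁻¹ * (n:ℝ)))
          (((hKφm.mul hρm).mul ((hgnm n).comp hY1)).aestronglyMeasurable) ?_
        filter_upwards [hKρb] with ω h
        rw [Real.norm_eq_abs, abs_mul]
        exact mul_le_mul h (hgn_bd n _) (abs_nonneg _) (by positivity)
      exact (integral_mul_condexp hm1_le hKρsm hgY hKρZi).symm
    have hlim1 : Tendsto (fun n : ℕ => ∫ ω, Kφ ω * (R ω * gn n (Y1 ω)) ∂P) atTop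
        (𝓝 (∫ ω, Kφ ω * (R ω * Y1 ω) ∂P)) := by
      refine tendsto_integral_of_dominated_convergence (fun ω => (ε*ε)⁻¹ * |Y1 ω|)
        (fun n => (hKφm.mul (hR.mul ((hgnm n).comp hY1))).aestronglyMeasurable)
        (hint1.abs.const_mul _) (fun n => ?_) ?_
      · filter_upwards with ω
        rw [Real.norm_eq_abs, abs_mul]
        refine mul_le_mul (hKφb ω) ?_ (abs_nonneg _) (by positivity)
        rw [abs_mul]
        calc |R ω| * |gn n (Y1 ω)| ≤ 1 * |Y1 ω| :=
              mul_le_mul (hRb ω) (hgn_absle n _) (abs_nonneg _) zero_le_one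
          _ = |Y1 ω| := one_mul _
      · filter_upwards with ω
        exact ((hgn_tend (Y1 ω)).const_mul (R ω)).const_mul (Kφ ω)
    have hlim2 : Tendsto (fun n : ℕ => ∫ ω, (Kφ ω * (P[R|m3 X T S1]) ω) * gn n (Y1 ω) ∂P) atTop
        (𝓝 (∫ ω, (Kφ ω * (P[R|m3 X T S1]) ω) * Y1 ω ∂P)) := by
      refine tendsto_integral_of_dominated_convergence (fun ω => (ε*ε)⁻¹ * |Y1 ω|)
        (fun n => ((hKφm.mul hρm).mul ((hgnm n).comp hY1)).aestronglyMeasurable)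
        (hint1.abs.const_mul _) (fun n => ?_) ?_
      · filter_upwards [hKρb] with ω h
        rw [Real.norm_eq_abs, abs_mul]
        exact mul_le_mul h (hgn_absle n _) (abs_nonneg _) (by positivity)
      · filter_upwards with ω
        exact (hgn_tend (Y1 ω)).const_mul (Kφ ω * (P[R|m3 X T S1]) ω)
    have heq1 : ∫ ω, Kφ ω * (R ω * Y1 ω) ∂P
        = ∫ ω, (Kφ ω * (P[R|m3 X T S1]) ω) * Y1 ω ∂P := by
      have h1' := hlim1
      rw [show (fun n : ℕ => ∫ ω, Kφ ω * (R ω * gn n (Y1 ω)) ∂P)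
        = fun n : ℕ => ∫ ω, (Kφ ω * (P[R|m3 X T S1]) ω) * gn n (Y1 ω) ∂P from funext hSn] at h1'
      exact tendsto_nhds_unique h1' hlim2
    have hKρYi : Integrable (fun ω => (Kφ ω * (P[R|m3 X T S1]) ω) * Y1 ω) P := by
      refine Integrable.mono' (hint1.abs.const_mul ((ε*ε)⁻¹))
        (((hKφm.mul hρm).mul hY1).aestronglyMeasurable) ?_
      filter_upwards [hKρb] with ω h
      rw [Real.norm_eq_abs, abs_mul]
      exact mul_le_mul_of_nonneg_right h (abs_nonneg _)
    have heq2 : ∫ ω, (Kφ ω * (P[R|m3 X T S1]) ω) * Y1 ω ∂P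
        = ∫ ω, (Kφ ω * (P[R|m3 X T S1]) ω) * mt 1 (X ω) (S1 ω) ∂P := by
      rw [integral_mul_condexp (K := fun ω => Kφ ω * (P[R|m3 X T S1]) ω) hm1_le
        (hKφsm.mul stronglyMeasurable_condExp) hint1 hKρYi]
      refine integral_congr_ae ?_
      filter_upwards [hY1m1] with ω h
      rw [← h]
    have hmtsm : StronglyMeasurable[m3 X T S1] fun ω => mt 1 (X ω) (S1 ω) :=
      hSM1 (hmt.comp (measurable_const.prodMk
        (measurable_fst.prodMk (measurable_snd.comp measurable_snd))))
    have hKmti : Integrable (fun ω => Kφ ω * mt 1 (X ω) (S1 ω)) P :=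
      bdd_mul_int hKφm hmtm hint4 hKφb
    have hKmtRi : Integrable (fun ω => (Kφ ω * mt 1 (X ω) (S1 ω)) * R ω) P := by
      refine Integrable.mono' hKmti.abs (((hKφm.mul hmtm).mul hR).aestronglyMeasurable) ?_
      filter_upwards with ω
      rw [Real.norm_eq_abs, abs_mul]
      have := mul_le_mul_of_nonneg_left (hRb ω) (abs_nonneg (Kφ ω * mt 1 (X ω) (S1 ω)))
      simpa using this
    have heq3 : ∫ ω, (Kφ ω * (P[R|m3 X T S1]) ω) * mt 1 (X ω) (S1 ω) ∂P
        = ∫ ω, (Kφ ω * mt 1 (X ω) (S1 ω)) * R ω ∂P := by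
      calc ∫ ω, (Kφ ω * (P[R|m3 X T S1]) ω) * mt 1 (X ω) (S1 ω) ∂P
          = ∫ ω, (Kφ ω * mt 1 (X ω) (S1 ω)) * (P[R|m3 X T S1]) ω ∂P :=
            integral_congr_ae (Filter.Eventually.of_forall fun ω => by ring)
        _ = ∫ ω, (Kφ ω * mt 1 (X ω) (S1 ω)) * R ω ∂P :=
            (integral_mul_condexp (K := fun ω => Kφ ω * mt 1 (X ω) (S1 ω)) hm1_le
              (hKφsm.mul hmtsm) (int_of_bdd hR hRb) hKmtRi).symm
    have heq4 : ∫ ω, (Kφ ω * mt 1 (X ω) (S1 ω)) * R ω ∂P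
        = ∫ ω, (Kφ ω * mt 1 (X ω) (S1 ω)) * r 1 (X ω) (S1 ω) ∂P := by
      have hG4m : Measurable fun p : ℝ × 𝒳 × 𝒮 =>
          p.1 * (e0 p.2.1 * r0 1 p.2.1 p.2.2)⁻¹ * mt 1 p.2.1 p.2.2 :=
        (measurable_fst.mul (((he0.comp (measurable_fst.comp measurable_snd)).mul
          (hr0.comp (measurable_const.prodMk measurable_snd))).inv)).mul
          (hmt.comp (measurable_const.prodMk measurable_snd))
      have hptw : ∀ ω, T ω * (e0 (X ω) * r0 1 (X ω) (obs T S0 S1 ω))⁻¹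
          * mt 1 (X ω) (obs T S0 S1 ω) = Kφ ω * mt 1 (X ω) (S1 ω) := by
        intro ω
        rcases hT01 ω with h | h <;> simp [hKφ_def, obs, h]
      have hG4i : Integrable (fun ω => T ω * (e0 (X ω) * r0 1 (X ω) (obs T S0 S1 ω))⁻¹
          * mt 1 (X ω) (obs T S0 S1 ω)) P :=
        hKmti.congr (Filter.Eventually.of_forall fun ω => (hptw ω).symm)
      have h := hL2 _ hG4m hG4i
      beta_reduce at h
      have e5 : ∫ ω, (Kφ ω * mt 1 (X ω) (S1 ω)) * R ω ∂P
          = ∫ ω, (T ω * (e0 (X ω) * r0 1 (X ω) (obs T S0 S1 ω))⁻¹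
              * mt 1 (X ω) (obs T S0 S1 ω)) * R ω ∂P := by
        refine integral_congr_ae (Filter.Eventually.of_forall fun ω => ?_)
        beta_reduce
        rw [hptw ω]
      have e6 : ∫ ω, (T ω * (e0 (X ω) * r0 1 (X ω) (obs T S0 S1 ω))⁻¹
            * mt 1 (X ω) (obs T S0 S1 ω))
            * r (T ω) (X ω) (obs T S0 S1 ω) ∂P
          = ∫ ω, (Kφ ω * mt 1 (X ω) (S1 ω)) * r 1 (X ω) (S1 ω) ∂P := by
        refine integral_congr_ae (Filter.Eventually.of_forall fun ω => ?_)
        rcases hT01 ω with h | h <;> simp [hKφ_def, obs, h]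
      rw [e5, ← e6, ← h]
    rw [heq1, heq2, heq3, heq4]
  -- step b : E[T R φ Mt0] = E[T r1 φ Mt0]
  have hAb : ∫ ω, (T ω * (e0 (X ω) * r0 1 (X ω) (S1 ω))⁻¹ * mt0 1 (X ω) (S1 ω)) * R ω ∂P
      = ∫ ω, (T ω * (e0 (X ω) * r0 1 (X ω) (S1 ω))⁻¹ * mt0 1 (X ω) (S1 ω))
          * r 1 (X ω) (S1 ω) ∂P := by
    have hG5m : Measurable fun p : ℝ × 𝒳 × 𝒮 =>
        p.1 * (e0 p.2.1 * r0 1 p.2.1 p.2.2)⁻¹ * mt0 1 p.2.1 p.2.2 :=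
      (measurable_fst.mul (((he0.comp (measurable_fst.comp measurable_snd)).mul
        (hr0.comp (measurable_const.prodMk measurable_snd))).inv)).mul
        (hmt0.comp (measurable_const.prodMk measurable_snd))
    have hTφmt0i : Integrable (fun ω => T ω * (e0 (X ω) * r0 1 (X ω) (S1 ω))⁻¹
        * mt0 1 (X ω) (S1 ω)) P :=
      (bdd_mul_int (hT.mul hφm) hmt0m hint2 (fun ω => by
        rw [Pi.mul_apply, abs_mul]
        calc |T ω| * |(e0 (X ω) * r0 1 (X ω) (S1 ω))⁻¹| ≤ 1 * (ε*ε)⁻¹ :=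
              mul_le_mul (hTb ω) (hφb ω) (abs_nonneg _) zero_le_one
          _ = (ε*ε)⁻¹ := one_mul _)).congr
        (Filter.Eventually.of_forall fun ω => by simp only [Pi.mul_apply])
    have hptw : ∀ ω, T ω * (e0 (X ω) * r0 1 (X ω) (obs T S0 S1 ω))⁻¹
        * mt0 1 (X ω) (obs T S0 S1 ω)
        = T ω * (e0 (X ω) * r0 1 (X ω) (S1 ω))⁻¹ * mt0 1 (X ω) (S1 ω) := by
      intro ω
      rcases hT01 ω with h | h <;> simp [obs, h]
    have hG5i : Integrable (fun ω => T ω * (e0 (X ω) * r0 1 (X ω) (obs T S0 S1 ω))⁻¹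
        * mt0 1 (X ω) (obs T S0 S1 ω)) P :=
      hTφmt0i.congr (Filter.Eventually.of_forall fun ω => (hptw ω).symm)
    have h := hL2 _ hG5m hG5i
    beta_reduce at h
    have e5 : ∫ ω, (T ω * (e0 (X ω) * r0 1 (X ω) (S1 ω))⁻¹ * mt0 1 (X ω) (S1 ω)) * R ω ∂P
        = ∫ ω, (T ω * (e0 (X ω) * r0 1 (X ω) (obs T S0 S1 ω))⁻¹
            * mt0 1 (X ω) (obs T S0 S1 ω)) * R ω ∂P := by
      refine integral_congr_ae (Filter.Eventually.of_forall fun ω => ?_)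
      beta_reduce
      rw [hptw ω]
    have e6 : ∫ ω, (T ω * (e0 (X ω) * r0 1 (X ω) (obs T S0 S1 ω))⁻¹
          * mt0 1 (X ω) (obs T S0 S1 ω))
          * r (T ω) (X ω) (obs T S0 S1 ω) ∂P
        = ∫ ω, (T ω * (e0 (X ω) * r0 1 (X ω) (S1 ω))⁻¹ * mt0 1 (X ω) (S1 ω))
            * r 1 (X ω) (S1 ω) ∂P := by
      refine integral_congr_ae (Filter.Eventually.of_forall fun ω => ?_)
      rcases hT01 ω with h | h <;> simp [obs, h]
    rw [e5, ← e6, ← h]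
  -- remaining bounds and integrability of the atoms
  have hrb1 : ∀ ω, |r 1 (X ω) (S1 ω)| ≤ 1 := fun ω =>
    abs_le.mpr ⟨by linarith [(hrRange 1 (X ω) (S1 ω)).1], (hrRange 1 (X ω) (S1 ω)).2⟩
  have hq7m : Measurable fun ω => r 1 (X ω) (S1 ω) * (e0 (X ω) * r0 1 (X ω) (S1 ω))⁻¹ :=
    hr1m.mul hφm
  have hq7b : ∀ ω, |r 1 (X ω) (S1 ω) * (e0 (X ω) * r0 1 (X ω) (S1 ω))⁻¹| ≤ (ε*ε)⁻¹ := fun ω => by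
    rw [abs_mul]
    calc |r 1 (X ω) (S1 ω)| * |(e0 (X ω) * r0 1 (X ω) (S1 ω))⁻¹| ≤ 1 * (ε*ε)⁻¹ :=
          mul_le_mul (hrb1 ω) (hφb ω) (abs_nonneg _) zero_le_one
      _ = (ε*ε)⁻¹ := one_mul _
  have hqIm : Measurable fun ω => e (X ω) * (e0 (X ω))⁻¹ := heXm.mul he0Xm.inv
  have hinve0b : ∀ ω, |(e0 (X ω))⁻¹| ≤ ε⁻¹ := fun ω => by
    rw [abs_of_nonneg (inv_nonneg.mpr (he0pos _).le)]
    exact inv_anti₀ hε0 (he0Range _).1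
  have iA1 : Integrable (fun ω => (e (X ω) * (e0 (X ω))⁻¹) * mt 1 (X ω) (S1 ω)) P :=
    bdd_mul_int hqIm hmtm hint4 hqIb
  have iA2 : Integrable (fun ω => (e (X ω) * (e0 (X ω))⁻¹) * mt0 1 (X ω) (S1 ω)) P :=
    bdd_mul_int hqIm hmt0m hint2 hqIb
  have iA3 : Integrable (fun ω => (e (X ω) * (e0 (X ω))⁻¹) * mu 1 (X ω)) P :=
    bdd_mul_int hqIm hmum hint5 hqIb
  have iA4 : Integrable (fun ω => (e (X ω) * (e0 (X ω))⁻¹) * mu0 1 (X ω)) P :=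
    bdd_mul_int hqIm hmu0m hint3 hqIb
  have iq7mt : Integrable (fun ω => (r 1 (X ω) (S1 ω) * (e0 (X ω) * r0 1 (X ω) (S1 ω))⁻¹)
      * mt 1 (X ω) (S1 ω)) P := bdd_mul_int hq7m hmtm hint4 hq7b
  have iq7mt0 : Integrable (fun ω => (r 1 (X ω) (S1 ω) * (e0 (X ω) * r0 1 (X ω) (S1 ω))⁻¹)
      * mt0 1 (X ω) (S1 ω)) P := bdd_mul_int hq7m hmt0m hint2 hq7b
  have iA7 : Integrable (fun ω => e (X ω) * ((r 1 (X ω) (S1 ω)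
      * (e0 (X ω) * r0 1 (X ω) (S1 ω))⁻¹) * mt 1 (X ω) (S1 ω))) P :=
    bdd_mul_int heXm (hq7m.mul hmtm) iq7mt (fun ω => heb _)
  have iA8 : Integrable (fun ω => e (X ω) * ((r 1 (X ω) (S1 ω)
      * (e0 (X ω) * r0 1 (X ω) (S1 ω))⁻¹) * mt0 1 (X ω) (S1 ω))) P :=
    bdd_mul_int heXm (hq7m.mul hmt0m) iq7mt0 (fun ω => heb _)
  have hTφb : ∀ ω, |T ω * (e0 (X ω) * r0 1 (X ω) (S1 ω))⁻¹| ≤ (ε*ε)⁻¹ := fun ω => by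
    rw [abs_mul]
    calc |T ω| * |(e0 (X ω) * r0 1 (X ω) (S1 ω))⁻¹| ≤ 1 * (ε*ε)⁻¹ :=
          mul_le_mul (hTb ω) (hφb ω) (abs_nonneg _) zero_le_one
      _ = (ε*ε)⁻¹ := one_mul _
  have iTRY : Integrable (fun ω => (T ω * (e0 (X ω) * r0 1 (X ω) (S1 ω))⁻¹)
      * (R ω * Y1 ω)) P :=
    bdd_mul_int (hT.mul hφm) (hR.mul hY1) (bdd_mul_int hR hY1 hint1 hRb) hTφb
  have iTφmt0 : Integrable (fun ω => T ω * (e0 (X ω) * r0 1 (X ω) (S1 ω))⁻¹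
      * mt0 1 (X ω) (S1 ω)) P := bdd_mul_int (hT.mul hφm) hmt0m hint2 hTφb
  have iTφmt0R : Integrable (fun ω => (T ω * (e0 (X ω) * r0 1 (X ω) (S1 ω))⁻¹
      * mt0 1 (X ω) (S1 ω)) * R ω) P :=
    (bdd_mul_int hR ((hT.mul hφm).mul hmt0m) iTφmt0 hRb).congr
      (Filter.Eventually.of_forall fun ω => by simp only [Pi.mul_apply]; ring)
  have iF3in : Integrable (fun ω => (e0 (X ω))⁻¹ * (mt0 1 (X ω) (S1 ω) - mu0 1 (X ω))) P :=
    bdd_mul_int he0Xm.inv (hmt0m.sub hmu0m) (hint2.sub hint3) hinve0b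
  have iF3 : Integrable (fun ω => T ω * ((e0 (X ω))⁻¹
      * (mt0 1 (X ω) (S1 ω) - mu0 1 (X ω)))) P :=
    bdd_mul_int hT (he0Xm.inv.mul (hmt0m.sub hmu0m)) iF3in hTb
  have iF2 : Integrable (fun ω => (T ω * (e0 (X ω) * r0 1 (X ω) (S1 ω))⁻¹) * (R ω * Y1 ω)
      - (T ω * (e0 (X ω) * r0 1 (X ω) (S1 ω))⁻¹ * mt0 1 (X ω) (S1 ω)) * R ω) P :=
    iTRY.sub iTφmt0R
  -- decompose the left-hand side integral
  have hLHSeq : (∫ ω, mu0 1 (X ω)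
        + T ω * R ω / (e0 (X ω) * r0 1 (X ω) (obs T S0 S1 ω))
          * (obs T Y0 Y1 ω - mt0 1 (X ω) (obs T S0 S1 ω))
        + T ω / e0 (X ω) * (mt0 1 (X ω) (obs T S0 S1 ω) - mu0 1 (X ω)) ∂P)
      = (∫ ω, mu0 1 (X ω) ∂P)
        + ((∫ ω, ((T ω * (e0 (X ω) * r0 1 (X ω) (S1 ω))⁻¹) * (R ω * Y1 ω)
            - (T ω * (e0 (X ω) * r0 1 (X ω) (S1 ω))⁻¹ * mt0 1 (X ω) (S1 ω)) * R ω) ∂P)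
          + ∫ ω, T ω * ((e0 (X ω))⁻¹ * (mt0 1 (X ω) (S1 ω) - mu0 1 (X ω))) ∂P) := by
    calc ∫ ω, mu0 1 (X ω)
          + T ω * R ω / (e0 (X ω) * r0 1 (X ω) (obs T S0 S1 ω))
            * (obs T Y0 Y1 ω - mt0 1 (X ω) (obs T S0 S1 ω))
          + T ω / e0 (X ω) * (mt0 1 (X ω) (obs T S0 S1 ω) - mu0 1 (X ω)) ∂P
        = ∫ ω, (mu0 1 (X ω)
            + (((T ω * (e0 (X ω) * r0 1 (X ω) (S1 ω))⁻¹) * (R ω * Y1 ω)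
              - (T ω * (e0 (X ω) * r0 1 (X ω) (S1 ω))⁻¹ * mt0 1 (X ω) (S1 ω)) * R ω)
              + T ω * ((e0 (X ω))⁻¹ * (mt0 1 (X ω) (S1 ω) - mu0 1 (X ω))))) ∂P := by
          refine integral_congr_ae (Filter.Eventually.of_forall fun ω => ?_)
          rcases hT01 ω with h | h <;> simp [obs, h] <;> ring
      _ = (∫ ω, mu0 1 (X ω) ∂P)
          + ∫ ω, (((T ω * (e0 (X ω) * r0 1 (X ω) (S1 ω))⁻¹) * (R ω * Y1 ω)
              - (T ω * (e0 (X ω) * r0 1 (X ω) (S1 ω))⁻¹ * mt0 1 (X ω) (S1 ω)) * R ω)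
              + T ω * ((e0 (X ω))⁻¹ * (mt0 1 (X ω) (S1 ω) - mu0 1 (X ω)))) ∂P :=
          integral_add hint3 (iF2.add iF3)
      _ = (∫ ω, mu0 1 (X ω) ∂P)
          + ((∫ ω, ((T ω * (e0 (X ω) * r0 1 (X ω) (S1 ω))⁻¹) * (R ω * Y1 ω)
              - (T ω * (e0 (X ω) * r0 1 (X ω) (S1 ω))⁻¹ * mt0 1 (X ω) (S1 ω)) * R ω) ∂P)
            + ∫ ω, T ω * ((e0 (X ω))⁻¹ * (mt0 1 (X ω) (S1 ω) - mu0 1 (X ω))) ∂P) := by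
          rw [integral_add iF2 iF3]
  -- evaluate the second piece
  have hF2a : ∫ ω, (T ω * (e0 (X ω) * r0 1 (X ω) (S1 ω))⁻¹) * (R ω * Y1 ω) ∂P
      = ∫ ω, e (X ω) * ((r 1 (X ω) (S1 ω) * (e0 (X ω) * r0 1 (X ω) (S1 ω))⁻¹)
          * mt 1 (X ω) (S1 ω)) ∂P := by
    rw [hAa]
    have hG6m : Measurable fun p : 𝒳 × ℝ × 𝒮 =>
        (r 1 p.1 p.2.2 * (e0 p.1 * r0 1 p.1 p.2.2)⁻¹) * mt 1 p.1 p.2.2 :=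
      ((hr.comp (measurable_const.prodMk (measurable_fst.prodMk
        (measurable_snd.comp measurable_snd)))).mul
        (((he0.comp measurable_fst).mul (hr0.comp (measurable_const.prodMk
          (measurable_fst.prodMk (measurable_snd.comp measurable_snd))))).inv)).mul
        (hmt.comp (measurable_const.prodMk (measurable_fst.prodMk
          (measurable_snd.comp measurable_snd))))
    have h := hL1 _ hG6m iq7mt
    beta_reduce at h
    calc ∫ ω, (T ω * (e0 (X ω) * r0 1 (X ω) (S1 ω))⁻¹ * mt 1 (X ω) (S1 ω))
          * r 1 (X ω) (S1 ω) ∂P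
        = ∫ ω, T ω * ((r 1 (X ω) (S1 ω) * (e0 (X ω) * r0 1 (X ω) (S1 ω))⁻¹)
            * mt 1 (X ω) (S1 ω)) ∂P :=
          integral_congr_ae (Filter.Eventually.of_forall fun ω => by ring)
      _ = ∫ ω, e (X ω) * ((r 1 (X ω) (S1 ω) * (e0 (X ω) * r0 1 (X ω) (S1 ω))⁻¹)
            * mt 1 (X ω) (S1 ω)) ∂P := h
  have hF2b : ∫ ω, (T ω * (e0 (X ω) * r0 1 (X ω) (S1 ω))⁻¹ * mt0 1 (X ω) (S1 ω)) * R ω ∂P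
      = ∫ ω, e (X ω) * ((r 1 (X ω) (S1 ω) * (e0 (X ω) * r0 1 (X ω) (S1 ω))⁻¹)
          * mt0 1 (X ω) (S1 ω)) ∂P := by
    rw [hAb]
    have hG7m : Measurable fun p : 𝒳 × ℝ × 𝒮 =>
        (r 1 p.1 p.2.2 * (e0 p.1 * r0 1 p.1 p.2.2)⁻¹) * mt0 1 p.1 p.2.2 :=
      ((hr.comp (measurable_const.prodMk (measurable_fst.prodMk
        (measurable_snd.comp measurable_snd)))).mul
        (((he0.comp measurable_fst).mul (hr0.comp (measurable_const.prodMk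
          (measurable_fst.prodMk (measurable_snd.comp measurable_snd))))).inv)).mul
        (hmt0.comp (measurable_const.prodMk (measurable_fst.prodMk
          (measurable_snd.comp measurable_snd))))
    have h := hL1 _ hG7m iq7mt0
    beta_reduce at h
    calc ∫ ω, (T ω * (e0 (X ω) * r0 1 (X ω) (S1 ω))⁻¹ * mt0 1 (X ω) (S1 ω))
          * r 1 (X ω) (S1 ω) ∂P
        = ∫ ω, T ω * ((r 1 (X ω) (S1 ω) * (e0 (X ω) * r0 1 (X ω) (S1 ω))⁻¹)
            * mt0 1 (X ω) (S1 ω)) ∂P :=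
          integral_congr_ae (Filter.Eventually.of_forall fun ω => by ring)
      _ = ∫ ω, e (X ω) * ((r 1 (X ω) (S1 ω) * (e0 (X ω) * r0 1 (X ω) (S1 ω))⁻¹)
            * mt0 1 (X ω) (S1 ω)) ∂P := h
  have hF2val : ∫ ω, ((T ω * (e0 (X ω) * r0 1 (X ω) (S1 ω))⁻¹) * (R ω * Y1 ω)
      - (T ω * (e0 (X ω) * r0 1 (X ω) (S1 ω))⁻¹ * mt0 1 (X ω) (S1 ω)) * R ω) ∂P
      = (∫ ω, e (X ω) * ((r 1 (X ω) (S1 ω) * (e0 (X ω) * r0 1 (X ω) (S1 ω))⁻¹)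
          * mt 1 (X ω) (S1 ω)) ∂P)
        - ∫ ω, e (X ω) * ((r 1 (X ω) (S1 ω) * (e0 (X ω) * r0 1 (X ω) (S1 ω))⁻¹)
          * mt0 1 (X ω) (S1 ω)) ∂P := by
    rw [integral_sub iTRY iTφmt0R, hF2a, hF2b]
  -- evaluate the third piece
  have hF3val : ∫ ω, T ω * ((e0 (X ω))⁻¹ * (mt0 1 (X ω) (S1 ω) - mu0 1 (X ω))) ∂P
      = (∫ ω, (e (X ω) * (e0 (X ω))⁻¹) * mt0 1 (X ω) (S1 ω) ∂P)
        - ∫ ω, (e (X ω) * (e0 (X ω))⁻¹) * mu0 1 (X ω) ∂P := by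
    have hG2m : Measurable fun p : 𝒳 × ℝ × 𝒮 => (e0 p.1)⁻¹ * (mt0 1 p.1 p.2.2 - mu0 1 p.1) :=
      ((he0.comp measurable_fst).inv).mul
        ((hmt0.comp (measurable_const.prodMk (measurable_fst.prodMk
          (measurable_snd.comp measurable_snd)))).sub (hmu0.comp
          (measurable_const.prodMk measurable_fst)))
    have h := hL1 _ hG2m iF3in
    beta_reduce at h
    rw [h, ← integral_sub iA2 iA4]
    exact integral_congr_ae (Filter.Eventually.of_forall fun ω => by ring)
  -- the key orthogonality fact
  have hkeyA : ∫ ω, (e (X ω) * (e0 (X ω))⁻¹) * mt 1 (X ω) (S1 ω) ∂P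
      = ∫ ω, (e (X ω) * (e0 (X ω))⁻¹) * mu 1 (X ω) ∂P := by
    have hqbX : ∀ x : 𝒳, |e x * (e0 x)⁻¹| ≤ (ε*ε)⁻¹ := fun x => by
      rw [abs_mul]
      calc |e x| * |(e0 x)⁻¹| ≤ 1 * (ε*ε)⁻¹ := by
            refine mul_le_mul (heb _) ?_ (abs_nonneg _) zero_le_one
            rw [abs_of_nonneg (inv_nonneg.mpr (lt_of_lt_of_le hε0 (he0Range _).1).le)]
            refine inv_anti₀ (by positivity) ?_
            nlinarith [(he0Range x).1]
        _ = (ε*ε)⁻¹ := one_mul _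
    have h1 := hswap2 (fun p : 𝒳 × 𝒮 => e p.1 * (e0 p.1)⁻¹)
      ((he.comp measurable_fst).mul ((he0.comp measurable_fst).inv)) (fun p => hqbX p.1)
    have h2 := hswapX (fun x => e x * (e0 x)⁻¹) (he.mul he0.inv) hqbX
    exact h1.symm.trans h2
  -- right-hand side conversions
  have hRHS1 : (∫ ω, e (X ω) * (r 1 (X ω) (S1 ω) - r0 1 (X ω) (S1 ω))
        / (e0 (X ω) * r0 1 (X ω) (S1 ω)) * (mt 1 (X ω) (S1 ω) - mt0 1 (X ω) (S1 ω)) ∂P)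
      = ((∫ ω, e (X ω) * ((r 1 (X ω) (S1 ω) * (e0 (X ω) * r0 1 (X ω) (S1 ω))⁻¹)
            * mt 1 (X ω) (S1 ω)) ∂P)
          - ∫ ω, e (X ω) * ((r 1 (X ω) (S1 ω) * (e0 (X ω) * r0 1 (X ω) (S1 ω))⁻¹)
            * mt0 1 (X ω) (S1 ω)) ∂P)
        - ((∫ ω, (e (X ω) * (e0 (X ω))⁻¹) * mt 1 (X ω) (S1 ω) ∂P)
          - ∫ ω, (e (X ω) * (e0 (X ω))⁻¹) * mt0 1 (X ω) (S1 ω) ∂P) := by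
    calc ∫ ω, e (X ω) * (r 1 (X ω) (S1 ω) - r0 1 (X ω) (S1 ω))
          / (e0 (X ω) * r0 1 (X ω) (S1 ω)) * (mt 1 (X ω) (S1 ω) - mt0 1 (X ω) (S1 ω)) ∂P
        = ∫ ω, ((e (X ω) * ((r 1 (X ω) (S1 ω) * (e0 (X ω) * r0 1 (X ω) (S1 ω))⁻¹)
              * mt 1 (X ω) (S1 ω))
            - e (X ω) * ((r 1 (X ω) (S1 ω) * (e0 (X ω) * r0 1 (X ω) (S1 ω))⁻¹)
              * mt0 1 (X ω) (S1 ω)))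
            - ((e (X ω) * (e0 (X ω))⁻¹) * mt 1 (X ω) (S1 ω)
              - (e (X ω) * (e0 (X ω))⁻¹) * mt0 1 (X ω) (S1 ω))) ∂P := by
          refine integral_congr_ae (Filter.Eventually.of_forall fun ω => ?_)
          have h1 : e0 (X ω) ≠ 0 := (he0pos _).ne'
          have h2 : r0 1 (X ω) (S1 ω) ≠ 0 := (hr0pos 1 (X ω) (S1 ω)).ne'
          field_simp
      _ = (∫ ω, (e (X ω) * ((r 1 (X ω) (S1 ω) * (e0 (X ω) * r0 1 (X ω) (S1 ω))⁻¹)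
              * mt 1 (X ω) (S1 ω))
            - e (X ω) * ((r 1 (X ω) (S1 ω) * (e0 (X ω) * r0 1 (X ω) (S1 ω))⁻¹)
              * mt0 1 (X ω) (S1 ω))) ∂P)
          - ∫ ω, ((e (X ω) * (e0 (X ω))⁻¹) * mt 1 (X ω) (S1 ω)
              - (e (X ω) * (e0 (X ω))⁻¹) * mt0 1 (X ω) (S1 ω)) ∂P :=
          integral_sub (iA7.sub iA8) (iA1.sub iA2)
      _ = _ := by rw [integral_sub iA7 iA8, integral_sub iA1 iA2]
  have hRHS2 : (∫ ω, (e (X ω) - e0 (X ω)) / e0 (X ω) * (mu 1 (X ω) - mu0 1 (X ω)) ∂P)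
      = ((∫ ω, (e (X ω) * (e0 (X ω))⁻¹) * mu 1 (X ω) ∂P) - ∫ ω, mu 1 (X ω) ∂P)
        - ((∫ ω, (e (X ω) * (e0 (X ω))⁻¹) * mu0 1 (X ω) ∂P) - ∫ ω, mu0 1 (X ω) ∂P) := by
    calc ∫ ω, (e (X ω) - e0 (X ω)) / e0 (X ω) * (mu 1 (X ω) - mu0 1 (X ω)) ∂P
        = ∫ ω, (((e (X ω) * (e0 (X ω))⁻¹) * mu 1 (X ω) - mu 1 (X ω))
            - ((e (X ω) * (e0 (X ω))⁻¹) * mu0 1 (X ω) - mu0 1 (X ω))) ∂P := by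
          refine integral_congr_ae (Filter.Eventually.of_forall fun ω => ?_)
          have h1 : e0 (X ω) ≠ 0 := (he0pos _).ne'
          field_simp
      _ = (∫ ω, ((e (X ω) * (e0 (X ω))⁻¹) * mu 1 (X ω) - mu 1 (X ω)) ∂P)
          - ∫ ω, ((e (X ω) * (e0 (X ω))⁻¹) * mu0 1 (X ω) - mu0 1 (X ω)) ∂P :=
          integral_sub (iA3.sub hint5) (iA4.sub hint3)
      _ = _ := by rw [integral_sub iA3 hint5, integral_sub iA4 hint3]
  have main : (∫ ω, mu0 1 (X ω)
        + T ω * R ω / (e0 (X ω) * r0 1 (X ω) (obs T S0 S1 ω))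
          * (obs T Y0 Y1 ω - mt0 1 (X ω) (obs T S0 S1 ω))
        + T ω / e0 (X ω) * (mt0 1 (X ω) (obs T S0 S1 ω) - mu0 1 (X ω)) ∂P)
      - ∫ ω, Y1 ω ∂P
      = (∫ ω, e (X ω) * (r 1 (X ω) (S1 ω) - r0 1 (X ω) (S1 ω))
          / (e0 (X ω) * r0 1 (X ω) (S1 ω))
          * (mt 1 (X ω) (S1 ω) - mt0 1 (X ω) (S1 ω)) ∂P)
        + ∫ ω, (e (X ω) - e0 (X ω)) / e0 (X ω) * (mu 1 (X ω) - mu0 1 (X ω)) ∂P := by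
    rw [hLHSeq, hF2val, hF3val, hEY1, hRHS1, hRHS2]
    linarith [hkeyA]
  refine ⟨main, fun hz1 hz2 => ?_⟩
  have hR1z : (∫ ω, e (X ω) * (r 1 (X ω) (S1 ω) - r0 1 (X ω) (S1 ω))
      / (e0 (X ω) * r0 1 (X ω) (S1 ω)) * (mt 1 (X ω) (S1 ω) - mt0 1 (X ω) (S1 ω)) ∂P) = 0 := by
    rw [← integral_zero Ω ℝ (μ := P)]
    refine integral_congr_ae ?_
    filter_upwards [hz1] with ω h
    have h' : (mt 1 (X ω) (S1 ω) - mt0 1 (X ω) (S1 ω))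
        * (r 1 (X ω) (S1 ω) - r0 1 (X ω) (S1 ω)) = 0 := by linear_combination h
    rcases mul_eq_zero.mp h' with hc | hc
    · rw [hc, mul_zero]
    · rw [show r 1 (X ω) (S1 ω) - r0 1 (X ω) (S1 ω) = 0 from hc, mul_zero, zero_div, zero_mul]
  have hR2z : (∫ ω, (e (X ω) - e0 (X ω)) / e0 (X ω) * (mu 1 (X ω) - mu0 1 (X ω)) ∂P) = 0 := by
    rw [← integral_zero Ω ℝ (μ := P)]
    refine integral_congr_ae ?_
    filter_upwards [hz2] with ω h
    have h' : (mu 1 (X ω) - mu0 1 (X ω)) * (e (X ω) - e0 (X ω)) = 0 := by linear_combination h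
    rcases mul_eq_zero.mp h' with hc | hc
    · rw [hc, mul_zero]
    · rw [show e (X ω) - e0 (X ω) = 0 from hc, zero_div, zero_mul]
  linarith [main, hR1z, hR2z]
end
end

section
/- Efficiency gains under MCAR (Proposition on the MCAR setting). Assume Assumption 1(i), ε ≤ e*(X) ≤ 1−ε a.s. for some ε ∈ (0,1/2), Y(0), Y(1) ∈ L²(P), and that R is independent of (X, T, S(0), S(1), Y(0), Y(1)); write p := P(R=1). Define: V_i := E[ ( (T/e*(X))·(Y − μ*(1,X)) − ((1−T)/(1−e*(X)))·(Y − μ*(0,X)) )² ] + E[ (μ*(1,X) − μ*(0,X) − δ*)² ]; V_ii := E[A²] + p·E[B²] + p·E[C²] and V_iii := E[A²], where A := (T/e*(X))·(Y − μ̃*(1,X,S)) − ((1−T)/(1−e*(X)))·(Y − μ̃*(0,X,S)), B := μ*(1,X) − μ*(0,X) − δ*, and C := (T/e*(X))·(μ̃*(1,X,S) − μ*(1,X)) − ((1−T)/(1−e*(X)))·(μ̃*(0,X,S) − μ*(0,X)). Then V_i − V_ii = (1−p)·( E[ (1/e*(X))·Var(μ̃*(1,X,S(1)) | σ(X)) +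 (1/(1−e*(X)))·Var(μ̃*(0,X,S(0)) | σ(X)) ] + E[B²] ) and V_ii − V_iii = p·( E[ (1/e*(X))·Var(μ̃*(1,X,S(1)) | σ(X)) + (1/(1−e*(X)))·Var(μ̃*(0,X,S(0)) | σ(X)) ] + E[B²] ). -/
open MeasureTheory ProbabilityTheory Filter
open scoped ENNReal NNReal Topology

noncomputable section

open Surrogate


section Aux17

set_option maxHeartbeats 1000000

variable {Ω : Type*} {m0 : MeasurableSpace Ω} {P : Measure Ω} [IsProbabilityMeasure P]

lemma aux_integrable_of_bdd {f : Ω → ℝ} {C : ℝ} (hf : AEStronglyMeasurable f P)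
    (h : ∀ᵐ ω ∂P, |f ω| ≤ C) : Integrable f P :=
  (integrable_const C).mono' hf (by filter_upwards [h] with ω hω; simpa using hω)

lemma aux_mul_integrable {f g : Ω → ℝ} (hf : MemLp f 2 P) (hg : MemLp g 2 P) :
    Integrable (fun ω => f ω * g ω) P := by
  refine Integrable.mono' ((hf.integrable_sq.add hg.integrable_sq).const_mul (1/2))
    (hf.aestronglyMeasurable.mul hg.aestronglyMeasurable) (ae_of_all _ fun ω => ?_)
  have h1 : ‖f ω * g ω‖ = |f ω| * |g ω| := by rw [Real.norm_eq_abs, abs_mul]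
  rw [h1]
  simp only [Pi.add_apply]
  nlinarith [sq_nonneg (|f ω| - |g ω|), sq_abs (f ω), sq_abs (g ω), abs_nonneg (f ω),
    abs_nonneg (g ω)]

lemma aux_memL2_weight {f w : Ω → ℝ} {c : ℝ} (hf : MemLp f 2 P)
    (hw : AEStronglyMeasurable w P) (hbdd : ∀ᵐ ω ∂P, |w ω| ≤ c) :
    MemLp (fun ω => w ω * f ω) 2 P := by
  refine MemLp.of_le_mul (c := c) hf (hw.mul hf.aestronglyMeasurable) ?_
  filter_upwards [hbdd] with ω hω
  rw [Real.norm_eq_abs, Real.norm_eq_abs, abs_mul]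
  exact mul_le_mul_of_nonneg_right hω (abs_nonneg _)

lemma aux_memL2_condexp {m : MeasurableSpace Ω} (hm : m ≤ m0) {f : Ω → ℝ}
    (hf : MemLp f 2 P) : MemLp (P[f|m]) 2 P := by
  haveI : SigmaFinite (P.trim hm) := inferInstance
  set g : Ω →₂[P] ℝ := (condExpL2 ℝ ℝ hm (hf.toLp f) : Ω →₂[P] ℝ) with hgdef
  have hgL2 : MemLp (g : Ω → ℝ) 2 P := Lp.memLp g
  have hgint : Integrable (g : Ω → ℝ) P := hgL2.integrable one_le_two
  have hint : ∀ s, MeasurableSet[m] s → P s < ∞ → Integrable (g : Ω → ℝ) (P.restrict s) :=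
    fun s _ _ => hgint.restrict
  have heq : ∀ s : Set Ω, MeasurableSet[m] s → P s < ∞ →
      ∫ x in s, (g : Ω → ℝ) x ∂P = ∫ x in s, f x ∂P := by
    intro s hs hμs
    rw [hgdef, integral_condExpL2_eq hm (hf.toLp f) hs hμs.ne]
    exact integral_congr_ae (ae_restrict_of_ae (hf.coeFn_toLp))
  have hmeas : AEStronglyMeasurable[m] (g : Ω → ℝ) P := aestronglyMeasurable_condExpL2 hm _
  have hae : (g : Ω → ℝ) =ᵐ[P] P[f|m] :=
    ae_eq_condExp_of_forall_setIntegral_eq hm (hf.integrable one_le_two) hint heq hmeas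
  exact MemLp.ae_eq hae hgL2

lemma aux_pull {m : MeasurableSpace Ω} (hm : m ≤ m0) {φ Z : Ω → ℝ}
    (hφ : StronglyMeasurable[m] φ) (hZ : Integrable Z P)
    (hφZ : Integrable (fun ω => φ ω * Z ω) P) :
    ∫ ω, φ ω * Z ω ∂P = ∫ ω, φ ω * (P[Z|m]) ω ∂P := by
  haveI : SigmaFinite (P.trim hm) := inferInstance
  have h2 : Integrable (φ * Z) P := hφZ
  calc ∫ ω, φ ω * Z ω ∂P = ∫ ω, (P[φ * Z|m]) ω ∂P := (integral_condExp hm).symm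
  _ = ∫ ω, φ ω * (P[Z|m]) ω ∂P :=
    integral_congr_ae ((condExp_mul_of_stronglyMeasurable_left hφ h2 hZ).mono fun ω h => by simpa using h)

lemma aux_ORT {m : MeasurableSpace Ω} (hm : m ≤ m0) {φ Yf Z : Ω → ℝ}
    (hφm : StronglyMeasurable[m] φ) (hφ2 : MemLp φ 2 P) (hY : MemLp Yf 2 P)
    (hZae : Z =ᵐ[P] P[Yf|m]) (hZL2 : MemLp Z 2 P) :
    ∫ ω, φ ω * (Yf ω - Z ω) ∂P = 0 := by
  have iφY : Integrable (fun ω => φ ω * Yf ω) P := aux_mul_integrable hφ2 hY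
  have iφZ : Integrable (fun ω => φ ω * Z ω) P := aux_mul_integrable hφ2 hZL2
  have hsplit : (fun ω => φ ω * (Yf ω - Z ω)) = fun ω => φ ω * Yf ω - φ ω * Z ω :=
    funext fun ω => by ring
  rw [hsplit, integral_sub iφY iφZ, aux_pull hm hφm (hY.integrable one_le_two) iφY]
  have : ∫ ω, φ ω * (P[Yf|m]) ω ∂P = ∫ ω, φ ω * Z ω ∂P :=
    integral_congr_ae (hZae.mono fun ω h => by simp only [h])
  rw [this, sub_self]

lemma aux_CV {m : MeasurableSpace Ω} (hm : m ≤ m0) {g Z M : Ω → ℝ} {c : ℝ}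
    (hgm : StronglyMeasurable[m] g) (hgbdd : ∀ᵐ ω ∂P, |g ω| ≤ c)
    (hZ : MemLp Z 2 P) (hM : StronglyMeasurable[m] M) (hML2 : MemLp M 2 P)
    (hMae : M =ᵐ[P] P[Z|m]) :
    ∫ ω, g ω * (Z ω - M ω) ^ 2 ∂P
      = ∫ ω, g ω * ((P[fun ω' => (Z ω') ^ 2|m]) ω - ((P[Z|m]) ω) ^ 2) ∂P := by
  have hg' := (hgm.mono hm).aestronglyMeasurable (μ := P)
  have iZ2 : Integrable (fun ω => (Z ω) ^ 2) P := hZ.integrable_sq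
  have iM2 : Integrable (fun ω => (M ω) ^ 2) P := hML2.integrable_sq
  have igZ2 : Integrable (fun ω => g ω * (Z ω) ^ 2) P := iZ2.bdd_mul hg' hgbdd
  have igM2 : Integrable (fun ω => g ω * (M ω) ^ 2) P := iM2.bdd_mul hg' hgbdd
  have hgML2 : MemLp (fun ω => g ω * M ω) 2 P := aux_memL2_weight hML2 hg' hgbdd
  have igMZ : Integrable (fun ω => (g ω * M ω) * Z ω) P := aux_mul_integrable hgML2 hZ
  have hgMm : StronglyMeasurable[m] (fun ω => g ω * M ω) := hgm.mul hM
  -- expand LHS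
  have hLHS : ∫ ω, g ω * (Z ω - M ω) ^ 2 ∂P
      = ∫ ω, g ω * (Z ω) ^ 2 ∂P - 2 * ∫ ω, (g ω * M ω) * Z ω ∂P + ∫ ω, g ω * (M ω) ^ 2 ∂P := by
    have h1 : (fun ω => g ω * (Z ω - M ω) ^ 2)
        = fun ω => (g ω * (Z ω) ^ 2 - 2 * ((g ω * M ω) * Z ω)) + g ω * (M ω) ^ 2 :=
      funext fun ω => by ring
    have i2' : Integrable (fun ω => 2 * (g ω * M ω * Z ω)) P := igMZ.const_mul 2
    have i12 : Integrable (fun ω => g ω * (Z ω) ^ 2 - 2 * (g ω * M ω * Z ω)) P := igZ2.sub i2'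
    rw [h1, integral_add i12 igM2, integral_sub igZ2 i2', integral_const_mul]
  have hpull1 : ∫ ω, (g ω * M ω) * Z ω ∂P = ∫ ω, g ω * (M ω) ^ 2 ∂P := by
    rw [aux_pull hm hgMm (hZ.integrable one_le_two) igMZ]
    refine integral_congr_ae (hMae.mono fun ω h => ?_)
    simp only [← h]; ring
  have hpull2 : ∫ ω, g ω * (Z ω) ^ 2 ∂P = ∫ ω, g ω * (P[fun ω' => (Z ω') ^ 2|m]) ω ∂P :=
    aux_pull hm hgm iZ2 igZ2
  have hcondM : Integrable (fun ω => g ω * ((P[Z|m]) ω) ^ 2) P := by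
    refine igM2.congr (hMae.mono fun ω h => ?_)
    simp only [h]
  have hRHS : ∫ ω, g ω * ((P[fun ω' => (Z ω') ^ 2|m]) ω - ((P[Z|m]) ω) ^ 2) ∂P
      = ∫ ω, g ω * (P[fun ω' => (Z ω') ^ 2|m]) ω ∂P - ∫ ω, g ω * ((P[Z|m]) ω) ^ 2 ∂P := by
    have h1 : (fun ω => g ω * ((P[fun ω' => (Z ω') ^ 2|m]) ω - ((P[Z|m]) ω) ^ 2))
        = fun ω => g ω * (P[fun ω' => (Z ω') ^ 2|m]) ω - g ω * ((P[Z|m]) ω) ^ 2 :=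
      funext fun ω => by ring
    rw [h1]
    exact integral_sub (integrable_condExp.bdd_mul hg' hgbdd) hcondM
  have hcondM2 : ∫ ω, g ω * ((P[Z|m]) ω) ^ 2 ∂P = ∫ ω, g ω * (M ω) ^ 2 ∂P :=
    integral_congr_ae (hMae.mono fun ω h => by simp only [← h])
  rw [hLHS, hpull1, hRHS, hcondM2, hpull2]
  ring

lemma aux_key_transfer {𝒳 α : Type*} [MeasurableSpace 𝒳] [MeasurableSpace α]
    {X : Ω → 𝒳} {U : Ω → α} {T : Ω → ℝ}
    (hX : Measurable X) (hU : Measurable U) (hT : Measurable T)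
    (hT01 : ∀ ω, T ω = 0 ∨ T ω = 1)
    {e : 𝒳 → ℝ} (he : Measurable e) (he01 : ∀ x, e x ∈ Set.Icc (0:ℝ) 1)
    (heSpec : (fun ω => e (X ω)) =ᵐ[P] P[T|mX X])
    (hCI : CondIndepBdd P (mX X) U T)
    {h : 𝒳 × α → ℝ} (hh : Measurable h)
    (hInt : Integrable (fun ω => h (X ω, U ω)) P) :
    ∫ ω, T ω * h (X ω, U ω) ∂P = ∫ ω, e (X ω) * h (X ω, U ω) ∂P := by
  have hm : mX X ≤ m0 := measurable_iff_comap_le.mp hX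
  haveI : SigmaFinite (P.trim hm) := inferInstance
  have hXm : Measurable[mX X] X := measurable_iff_comap_le.mpr le_rfl
  have hT0 : ∀ ω, 0 ≤ T ω := fun ω => by rcases hT01 ω with h'|h' <;> rw [h'] <;> norm_num
  have hT1 : ∀ ω, T ω ≤ 1 := fun ω => by rcases hT01 ω with h'|h' <;> rw [h'] <;> norm_num
  have hTabs : ∀ ω, |T ω| ≤ 1 := fun ω => abs_le.mpr ⟨by linarith [hT0 ω], hT1 ω⟩
  have heabs : ∀ x, |e x| ≤ 1 := fun x => abs_le.mpr ⟨by linarith [(he01 x).1], (he01 x).2⟩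
  have heXm : StronglyMeasurable[mX X] (fun ω => e (X ω)) := (he.comp hXm).stronglyMeasurable
  have hTint : Integrable T P := aux_integrable_of_bdd hT.aestronglyMeasurable
    (ae_of_all _ hTabs)
  have heint : Integrable (fun ω => e (X ω)) P :=
    aux_integrable_of_bdd (he.comp hX).aestronglyMeasurable (ae_of_all _ fun ω => heabs (X ω))
  -- Step 0: rectangles
  have step0 : ∀ A : Set 𝒳, MeasurableSet A → ∀ B : Set α, MeasurableSet B →
      ∫ ω in X ⁻¹' A ∩ U ⁻¹' B, T ω ∂P = ∫ ω in X ⁻¹' A ∩ U ⁻¹' B, e (X ω) ∂P := by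
    intro A hA B hB
    set fB : α → ℝ := B.indicator (fun _ => (1:ℝ)) with hfBdef
    have hfBmeas : Measurable fB := measurable_const.indicator hB
    have hfB01 : ∀ a, fB a = 0 ∨ fB a = 1 := fun a => by
      by_cases ha : a ∈ B
      · right; simp [hfBdef, ha]
      · left; simp [hfBdef, ha]
    have hfBbdd : Bdd fB := ⟨1, fun a => by rcases hfB01 a with h'|h' <;> rw [h'] <;> norm_num⟩
    set gT : ℝ → ℝ := fun t => max 0 (min t 1) with hgTdef
    have hgTmeas : Measurable gT := measurable_const.max (measurable_id.min measurable_const)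
    have hgTbdd : Bdd gT := by
      refine ⟨1, fun a => ?_⟩
      rw [hgTdef, abs_of_nonneg (le_max_left _ _)]
      exact max_le (by norm_num) (min_le_right _ _)
    have h1 := hCI fB hfBmeas hfBbdd gT hgTmeas hgTbdd
    have hgTT : (fun ω => fB (U ω) * gT (T ω)) = fun ω => fB (U ω) * T ω := by
      funext ω; rcases hT01 ω with h'|h' <;> rw [h'] <;> norm_num [hgTdef]
    have hgTT2 : (fun ω' => gT (T ω')) = T := by
      funext ω; rcases hT01 ω with h'|h' <;> rw [h'] <;> norm_num [hgTdef]
    rw [hgTT, hgTT2] at h1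
    have hintfT : Integrable (fun ω => fB (U ω) * T ω) P := by
      refine aux_integrable_of_bdd (C := 1) ((hfBmeas.comp hU).mul hT).aestronglyMeasurable
        (ae_of_all _ fun ω => ?_)
      rw [abs_mul]
      rcases hfB01 (U ω) with h'|h' <;> rw [h'] <;> simp [hTabs ω]
    have hintfe : Integrable (fun ω => e (X ω) * fB (U ω)) P := by
      refine aux_integrable_of_bdd (C := 1) ((he.comp hX).mul (hfBmeas.comp hU)).aestronglyMeasurable
        (ae_of_all _ fun ω => ?_)
      rw [abs_mul]
      rcases hfB01 (U ω) with h'|h' <;> rw [h'] <;> simp [heabs (X ω)]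
    have hsA : MeasurableSet[mX X] (X ⁻¹' A) := ⟨A, hA, rfl⟩
    have c1 : ∫ ω in X ⁻¹' A, fB (U ω) * T ω ∂P = ∫ ω in X ⁻¹' A, e (X ω) * fB (U ω) ∂P := by
      calc ∫ ω in X ⁻¹' A, fB (U ω) * T ω ∂P
          = ∫ ω in X ⁻¹' A, (P[fun ω => fB (U ω) * T ω|mX X]) ω ∂P :=
            (setIntegral_condExp hm hintfT hsA).symm
        _ = ∫ ω in X ⁻¹' A, e (X ω) * (P[fun ω' => fB (U ω')|mX X]) ω ∂P := by
            refine setIntegral_congr_ae (hm _ hsA) ?_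
            filter_upwards [h1, heSpec] with ω hω h2ω _
            rw [hω, ← h2ω]; ring
        _ = ∫ ω in X ⁻¹' A, (P[(fun ω => e (X ω)) * (fun ω' => fB (U ω'))|mX X]) ω ∂P := by
            refine setIntegral_congr_ae (hm _ hsA) ?_
            have hmul := condExp_mul_of_stronglyMeasurable_left (μ := P) heXm
              (f := fun ω => e (X ω)) (g := fun ω' => fB (U ω'))
              (by exact hintfe) (aux_integrable_of_bdd (C := 1) (hfBmeas.comp hU).aestronglyMeasurable
                (ae_of_all _ fun ω => by rcases hfB01 (U ω) with h'|h' <;> rw [h'] <;> norm_num))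
            filter_upwards [hmul] with ω hω _
            rw [hω]; simp
        _ = ∫ ω in X ⁻¹' A, e (X ω) * fB (U ω) ∂P := by
            rw [setIntegral_condExp hm (by exact hintfe) hsA]
            simp only [Pi.mul_apply]
    have convT : ∫ ω in X ⁻¹' A, fB (U ω) * T ω ∂P = ∫ ω in X ⁻¹' A ∩ U ⁻¹' B, T ω ∂P := by
      rw [← setIntegral_indicator (hU hB)]
      refine integral_congr_ae (ae_of_all _ fun ω => ?_)
      by_cases hmem : U ω ∈ B <;> simp [hfBdef, Set.indicator_apply, hmem]
    have convE : ∫ ω in X ⁻¹' A, e (X ω) * fB (U ω) ∂P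
        = ∫ ω in X ⁻¹' A ∩ U ⁻¹' B, e (X ω) ∂P := by
      rw [← setIntegral_indicator (hU hB)]
      refine integral_congr_ae (ae_of_all _ fun ω => ?_)
      by_cases hmem : U ω ∈ B <;> simp [hfBdef, Set.indicator_apply, hmem]
    rw [← convT, c1, convE]
  -- measures
  have hpairm : Measurable (fun ω => (X ω, U ω)) := hX.prodMk hU
  set ν₁ : Measure (𝒳 × α) :=
    (P.withDensity fun ω => ENNReal.ofReal (T ω)).map (fun ω => (X ω, U ω)) with hν₁def
  set ν₂ : Measure (𝒳 × α) :=
    (P.withDensity fun ω => ENNReal.ofReal (e (X ω))).map (fun ω => (X ω, U ω)) with hν₂def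
  have rect : ∀ (v : Ω → ℝ), Integrable v P → (∀ ω, 0 ≤ v ω) → ∀ s : Set Ω, MeasurableSet s →
      ((P.withDensity fun ω => ENNReal.ofReal (v ω)) s) = ENNReal.ofReal (∫ ω in s, v ω ∂P) := by
    intro v hv hv0 s hs
    rw [withDensity_apply _ hs]
    exact (ofReal_integral_eq_lintegral_ofReal hv.restrict (ae_of_all _ hv0)).symm
  haveI hfin1 : IsFiniteMeasure ν₁ := by
    constructor
    rw [hν₁def, Measure.map_apply hpairm MeasurableSet.univ, Set.preimage_univ,
      rect T hTint hT0 _ MeasurableSet.univ]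
    exact ENNReal.ofReal_lt_top
  have hνeq : ν₁ = ν₂ := by
    refine ext_of_generate_finite _ generateFrom_prod.symm isPiSystem_prod ?_ ?_
    · rintro s hs
      rw [Set.mem_image2] at hs
      obtain ⟨A, hA, B, hB, rfl⟩ := hs
      have hABm : MeasurableSet (X ⁻¹' A ∩ U ⁻¹' B) := (hX hA).inter (hU hB)
      have hpre : (fun ω => (X ω, U ω)) ⁻¹' (A ×ˢ B) = X ⁻¹' A ∩ U ⁻¹' B :=
        Set.mk_preimage_prod X U
      rw [hν₁def, hν₂def, Measure.map_apply hpairm (hA.prod hB),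
        Measure.map_apply hpairm (hA.prod hB), hpre,
        rect T hTint hT0 _ hABm, rect _ heint (fun ω => (he01 (X ω)).1) _ hABm,
        step0 A hA B hB]
    · rw [hν₁def, hν₂def, Measure.map_apply hpairm MeasurableSet.univ,
        Measure.map_apply hpairm MeasurableSet.univ, Set.preimage_univ,
        rect T hTint hT0 _ MeasurableSet.univ, rect _ heint (fun ω => (he01 (X ω)).1) _
          MeasurableSet.univ]
      congr 1
      simp only [Measure.restrict_univ]
      calc ∫ ω, T ω ∂P = ∫ ω, (P[T|mX X]) ω ∂P := (integral_condExp hm).symm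
        _ = ∫ ω, e (X ω) ∂P := (integral_congr_ae heSpec).symm
  -- conclude
  have hcoe : ∀ (v : Ω → ℝ), (∀ ω, 0 ≤ v ω) →
      (fun ω => ENNReal.ofReal (v ω)) = (fun ω => ((fun ω' => (v ω').toNNReal) ω : ℝ≥0∞)) :=
    fun v _ => rfl
  have hconv : ∀ (v : Ω → ℝ), Measurable v → (∀ ω, 0 ≤ v ω) →
      ∫ q, h q ∂((P.withDensity fun ω => ENNReal.ofReal (v ω)).map (fun ω => (X ω, U ω)))
        = ∫ ω, v ω * h (X ω, U ω) ∂P := by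
    intro v hv hv0
    rw [integral_map hpairm.aemeasurable hh.aestronglyMeasurable, hcoe v hv0,
      integral_withDensity_eq_integral_smul (by exact hv.real_toNNReal) _]
    refine integral_congr_ae (ae_of_all _ fun ω => ?_)
    show (v ω).toNNReal • h (X ω, U ω) = v ω * h (X ω, U ω)
    rw [NNReal.smul_def, Real.coe_toNNReal _ (hv0 ω), smul_eq_mul]
  calc ∫ ω, T ω * h (X ω, U ω) ∂P = ∫ q, h q ∂ν₁ := (hconv T hT hT0).symm
    _ = ∫ q, h q ∂ν₂ := by rw [hνeq]
    _ = ∫ ω, e (X ω) * h (X ω, U ω) ∂P := hconv _ (he.comp hX) (fun ω => (he01 (X ω)).1)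

end Aux17


/-- Efficiency gains under MCAR (Proposition on the MCAR setting):
`V_i − V_ii = (1−p)·(V_S + E[B²])` and `V_ii − V_iii = p·(V_S + E[B²])`. -/
theorem statement17
    {Ω 𝒳 𝒮 : Type*} [MeasurableSpace Ω] [MeasurableSpace 𝒳] [MeasurableSpace 𝒮]
    [StandardBorelSpace 𝒳] [StandardBorelSpace 𝒮]
    (P : Measure Ω) [IsProbabilityMeasure P]
    (X : Ω → 𝒳) (T : Ω → ℝ) (S0 S1 : Ω → 𝒮) (Y0 Y1 : Ω → ℝ)
    (hX : Measurable X) (hT : Measurable T)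
    (hS0 : Measurable S0) (hS1 : Measurable S1)
    (hY0 : Measurable Y0) (hY1 : Measurable Y1)
    (hT01 : ∀ ω, T ω = 0 ∨ T ω = 1)
    -- the treatment propensity e* (note that E[T|σ(X)] = P(T=1|σ(X)))
    (e : 𝒳 → ℝ) (he : Measurable e) (heRange : ∀ x, e x ∈ Set.Icc (0 : ℝ) 1)
    (heSpec : (fun ω => e (X ω)) =ᵐ[P] P[T|mX X])
    -- Assumption 1(i)
    (h1i : ∀ t : ℝ, t = 0 ∨ t = 1 →
      CondIndepBdd P (mX X) (fun ω => (pot Y0 Y1 t ω, pot S0 S1 t ω)) T)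
    -- strict overlap for e*
    (ε : ℝ) (hε0 : 0 < ε) (hε : ε < 1 / 2)
    (h2e : ∀ᵐ ω ∂P, ε ≤ e (X ω) ∧ e (X ω) ≤ 1 - ε)
    -- the labeling indicator and MCAR assumption
    (R : Ω → ℝ) (hR : Measurable R) (hR01 : ∀ ω, R ω = 0 ∨ R ω = 1)
    (hMCAR : IndepFun R (fun ω => (X ω, T ω, S0 ω, S1 ω, Y0 ω, Y1 ω)) P)
    -- the outcome regressions μ̃* and μ*
    (mt : ℝ → 𝒳 → 𝒮 → ℝ) (hmt : Measurable fun p : ℝ × 𝒳 × 𝒮 => mt p.1 p.2.1 p.2.2)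
    (hmtSpec : ∀ t : ℝ, t = 0 ∨ t = 1 →
      (fun ω => mt t (X ω) (pot S0 S1 t ω)) =ᵐ[P] P[pot Y0 Y1 t|m2 X (pot S0 S1 t)])
    (mu : ℝ → 𝒳 → ℝ) (hmu : Measurable fun p : ℝ × 𝒳 => mu p.1 p.2)
    (hmuSpec : ∀ t : ℝ, t = 0 ∨ t = 1 →
      (fun ω => mu t (X ω)) =ᵐ[P] P[pot Y0 Y1 t|mX X])
    -- Y(0), Y(1) ∈ L²(P)
    (hY0L2 : MemLp Y0 2 P) (hY1L2 : MemLp Y1 2 P)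
    -- abbreviations (defined by the accompanying equations)
    (p : ℝ) (hp : p = (P {ω | R ω = 1}).toReal)
    (δ : ℝ) (hδ : δ = (∫ ω, Y1 ω ∂P) - ∫ ω, Y0 ω ∂P)
    (EA2 : ℝ) (hEA2 : EA2 = ∫ ω,
      (T ω / e (X ω) * (obs T Y0 Y1 ω - mt 1 (X ω) (obs T S0 S1 ω))
        - (1 - T ω) / (1 - e (X ω)) * (obs T Y0 Y1 ω - mt 0 (X ω) (obs T S0 S1 ω))) ^ 2 ∂P)
    (EB2 : ℝ) (hEB2 : EB2 = ∫ ω, (mu 1 (X ω) - mu 0 (X ω) - δ) ^ 2 ∂P)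
    (EC2 : ℝ) (hEC2 : EC2 = ∫ ω,
      (T ω / e (X ω) * (mt 1 (X ω) (obs T S0 S1 ω) - mu 1 (X ω))
        - (1 - T ω) / (1 - e (X ω)) * (mt 0 (X ω) (obs T S0 S1 ω) - mu 0 (X ω))) ^ 2 ∂P)
    (Vi : ℝ) (hVi : Vi = (∫ ω,
        (T ω / e (X ω) * (obs T Y0 Y1 ω - mu 1 (X ω))
          - (1 - T ω) / (1 - e (X ω)) * (obs T Y0 Y1 ω - mu 0 (X ω))) ^ 2 ∂P) + EB2)
    (Vii : ℝ) (hVii : Vii = EA2 + p * EB2 + p * EC2)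
    (Viii : ℝ) (hViii : Viii = EA2)
    (VS : ℝ) (hVS : VS = ∫ ω,
      (1 / e (X ω)) * condVar P (mX X) (fun ω' => mt 1 (X ω') (S1 ω')) ω
        + (1 / (1 - e (X ω))) * condVar P (mX X) (fun ω' => mt 0 (X ω') (S0 ω')) ω ∂P) :
    Vi - Vii = (1 - p) * (VS + EB2) ∧ Vii - Viii = p * (VS + EB2) := by
  classical
  -- σ-algebra facts
  have hm : mX X ≤ ‹MeasurableSpace Ω› := measurable_iff_comap_le.mp hX
  have hXm : Measurable[mX X] X := measurable_iff_comap_le.mpr le_rfl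
  have hm21 : m2 X S1 ≤ ‹MeasurableSpace Ω› := measurable_iff_comap_le.mp (hX.prodMk hS1)
  have hm20 : m2 X S0 ≤ ‹MeasurableSpace Ω› := measurable_iff_comap_le.mp (hX.prodMk hS0)
  have hXS1m : Measurable[m2 X S1] (fun ω => (X ω, S1 ω)) := measurable_iff_comap_le.mpr le_rfl
  have hXS0m : Measurable[m2 X S0] (fun ω => (X ω, S0 ω)) := measurable_iff_comap_le.mpr le_rfl
  have hmX21 : mX X ≤ m2 X S1 := measurable_iff_comap_le.mp (measurable_fst.comp hXS1m)
  have hmX20 : mX X ≤ m2 X S0 := measurable_iff_comap_le.mp (measurable_fst.comp hXS0m)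
  haveI : SigmaFinite (P.trim hm) := inferInstance
  haveI : SigmaFinite (P.trim hm21) := inferInstance
  haveI : SigmaFinite (P.trim hm20) := inferInstance
  -- pot computations
  have hpS1 : pot S0 S1 (1:ℝ) = S1 := if_pos rfl
  have hpS0 : pot S0 S1 (0:ℝ) = S0 := if_neg (by norm_num)
  have hpY1 : pot Y0 Y1 (1:ℝ) = Y1 := if_pos rfl
  have hpY0 : pot Y0 Y1 (0:ℝ) = Y0 := if_neg (by norm_num)
  -- measurability of nuisances
  have hmt1' : Measurable (fun q : 𝒳 × 𝒮 => mt 1 q.1 q.2) :=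
    hmt.comp (measurable_const.prodMk measurable_id)
  have hmt0' : Measurable (fun q : 𝒳 × 𝒮 => mt 0 q.1 q.2) :=
    hmt.comp (measurable_const.prodMk measurable_id)
  have hmu1' : Measurable (fun x => mu 1 x) := hmu.comp (measurable_const.prodMk measurable_id)
  have hmu0' : Measurable (fun x => mu 0 x) := hmu.comp (measurable_const.prodMk measurable_id)
  have hZ1meas : Measurable (fun ω => mt 1 (X ω) (S1 ω)) := hmt1'.comp (hX.prodMk hS1)
  have hZ0meas : Measurable (fun ω => mt 0 (X ω) (S0 ω)) := hmt0'.comp (hX.prodMk hS0)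
  have hM1meas : Measurable (fun ω => mu 1 (X ω)) := hmu1'.comp hX
  have hM0meas : Measurable (fun ω => mu 0 (X ω)) := hmu0'.comp hX
  -- conditional expectation identifications
  have hZ1ae : (fun ω => mt 1 (X ω) (S1 ω)) =ᵐ[P] P[Y1|m2 X S1] := by
    have h := hmtSpec 1 (Or.inr rfl); rwa [hpS1, hpY1] at h
  have hZ0ae : (fun ω => mt 0 (X ω) (S0 ω)) =ᵐ[P] P[Y0|m2 X S0] := by
    have h := hmtSpec 0 (Or.inl rfl); rwa [hpS0, hpY0] at h
  have hM1ae : (fun ω => mu 1 (X ω)) =ᵐ[P] P[Y1|mX X] := by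
    have h := hmuSpec 1 (Or.inr rfl); rwa [hpY1] at h
  have hM0ae : (fun ω => mu 0 (X ω)) =ᵐ[P] P[Y0|mX X] := by
    have h := hmuSpec 0 (Or.inl rfl); rwa [hpY0] at h
  -- L² memberships
  have hZ1L2 : MemLp (fun ω => mt 1 (X ω) (S1 ω)) 2 P :=
    MemLp.ae_eq hZ1ae.symm (aux_memL2_condexp hm21 hY1L2)
  have hZ0L2 : MemLp (fun ω => mt 0 (X ω) (S0 ω)) 2 P :=
    MemLp.ae_eq hZ0ae.symm (aux_memL2_condexp hm20 hY0L2)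
  have hM1L2 : MemLp (fun ω => mu 1 (X ω)) 2 P :=
    MemLp.ae_eq hM1ae.symm (aux_memL2_condexp hm hY1L2)
  have hM0L2 : MemLp (fun ω => mu 0 (X ω)) 2 P :=
    MemLp.ae_eq hM0ae.symm (aux_memL2_condexp hm hY0L2)
  have hf1L2 : MemLp (fun ω => mt 1 (X ω) (S1 ω) - mu 1 (X ω)) 2 P :=
    MemLp.ae_eq (Filter.Eventually.of_forall fun ω => rfl) (hZ1L2.sub hM1L2)
  have hf0L2 : MemLp (fun ω => mt 0 (X ω) (S0 ω) - mu 0 (X ω)) 2 P :=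
    MemLp.ae_eq (Filter.Eventually.of_forall fun ω => rfl) (hZ0L2.sub hM0L2)
  have hYZ1L2 : MemLp (fun ω => Y1 ω - mt 1 (X ω) (S1 ω)) 2 P :=
    MemLp.ae_eq (Filter.Eventually.of_forall fun ω => rfl) (hY1L2.sub hZ1L2)
  have hYZ0L2 : MemLp (fun ω => Y0 ω - mt 0 (X ω) (S0 ω)) 2 P :=
    MemLp.ae_eq (Filter.Eventually.of_forall fun ω => rfl) (hY0L2.sub hZ0L2)
  -- tower property
  have hM1tow : (fun ω => mu 1 (X ω)) =ᵐ[P] P[(fun ω => mt 1 (X ω) (S1 ω))|mX X] :=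
    hM1ae.trans ((condExp_condExp_of_le hmX21 hm21).symm.trans (condExp_congr_ae hZ1ae.symm))
  have hM0tow : (fun ω => mu 0 (X ω)) =ᵐ[P] P[(fun ω => mt 0 (X ω) (S0 ω))|mX X] :=
    hM0ae.trans ((condExp_condExp_of_le hmX20 hm20).symm.trans (condExp_congr_ae hZ0ae.symm))
  -- overlap bounds
  have hεpos' : (0:ℝ) < 1/ε := by positivity
  have hb1 : ∀ᵐ ω ∂P, |1 / e (X ω)| ≤ 1/ε := by
    filter_upwards [h2e] with ω hω
    have hpos : 0 < e (X ω) := lt_of_lt_of_le hε0 hω.1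
    rw [abs_of_nonneg (le_of_lt (by positivity))]
    exact one_div_le_one_div_of_le hε0 hω.1
  have hb0 : ∀ᵐ ω ∂P, |1 / (1 - e (X ω))| ≤ 1/ε := by
    filter_upwards [h2e] with ω hω
    have hge : ε ≤ 1 - e (X ω) := by linarith [hω.2]
    have hpos : 0 < 1 - e (X ω) := lt_of_lt_of_le hε0 hge
    rw [abs_of_nonneg (le_of_lt (by positivity))]
    exact one_div_le_one_div_of_le hε0 hge
  have hbT : ∀ᵐ ω ∂P, |T ω / e (X ω)| ≤ 1/ε := by
    filter_upwards [h2e] with ω hω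
    have hpos : 0 < e (X ω) := lt_of_lt_of_le hε0 hω.1
    rcases hT01 ω with h'|h'
    · rw [h', zero_div, abs_zero]; positivity
    · rw [h']
      rw [abs_of_nonneg (le_of_lt (by positivity))]
      exact one_div_le_one_div_of_le hε0 hω.1
  have hbT0 : ∀ᵐ ω ∂P, |(1 - T ω) / (1 - e (X ω))| ≤ 1/ε := by
    filter_upwards [h2e] with ω hω
    have hge : ε ≤ 1 - e (X ω) := by linarith [hω.2]
    have hpos : 0 < 1 - e (X ω) := lt_of_lt_of_le hε0 hge
    rcases hT01 ω with h'|h'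
    · rw [h', sub_zero]
      rw [abs_of_nonneg (le_of_lt (by positivity))]
      exact one_div_le_one_div_of_le hε0 hge
    · rw [h', sub_self, zero_div, abs_zero]
      positivity
  have hTabs : ∀ ω, |T ω| ≤ 1 := fun ω => by rcases hT01 ω with h'|h' <;> rw [h'] <;> norm_num
  have h1Tabs : ∀ ω, |1 - T ω| ≤ 1 := fun ω => by
    rcases hT01 ω with h'|h' <;> rw [h'] <;> norm_num
  -- weights: a.e. strongly measurable
  have hw1sm : AEStronglyMeasurable (fun ω => T ω / e (X ω)) P :=
    (hT.div (he.comp hX)).aestronglyMeasurable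
  have hw0sm : AEStronglyMeasurable (fun ω => (1 - T ω) / (1 - e (X ω))) P :=
    ((measurable_const.sub hT).div (measurable_const.sub (he.comp hX))).aestronglyMeasurable
  have hg1ae : AEStronglyMeasurable (fun ω => 1 / e (X ω)) P :=
    (measurable_const.div (he.comp hX)).aestronglyMeasurable
  have hg0ae : AEStronglyMeasurable (fun ω => 1 / (1 - e (X ω))) P :=
    (measurable_const.div (measurable_const.sub (he.comp hX))).aestronglyMeasurable
  -- conditional independence instantiations and key transfer
  have hCI1 : CondIndepBdd P (mX X) (fun ω => (Y1 ω, S1 ω)) T := by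
    have h := h1i 1 (Or.inr rfl); rwa [hpY1, hpS1] at h
  have hCI0 : CondIndepBdd P (mX X) (fun ω => (Y0 ω, S0 ω)) T := by
    have h := h1i 0 (Or.inl rfl); rwa [hpY0, hpS0] at h
  have KEY1 : ∀ h : 𝒳 × (ℝ × 𝒮) → ℝ, Measurable h →
      Integrable (fun ω => h (X ω, (Y1 ω, S1 ω))) P →
      ∫ ω, T ω * h (X ω, (Y1 ω, S1 ω)) ∂P = ∫ ω, e (X ω) * h (X ω, (Y1 ω, S1 ω)) ∂P :=
    fun h hh hInt =>
      aux_key_transfer hX (hY1.prodMk hS1) hT hT01 he heRange heSpec hCI1 hh hInt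
  have KEY0 : ∀ h : 𝒳 × (ℝ × 𝒮) → ℝ, Measurable h →
      Integrable (fun ω => h (X ω, (Y0 ω, S0 ω))) P →
      ∫ ω, T ω * h (X ω, (Y0 ω, S0 ω)) ∂P = ∫ ω, e (X ω) * h (X ω, (Y0 ω, S0 ω)) ∂P :=
    fun h hh hInt =>
      aux_key_transfer hX (hY0.prodMk hS0) hT hT01 he heRange heSpec hCI0 hh hInt
  have KEY0' : ∀ h : 𝒳 × (ℝ × 𝒮) → ℝ, Measurable h →
      Integrable (fun ω => h (X ω, (Y0 ω, S0 ω))) P →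
      ∫ ω, (1 - T ω) * h (X ω, (Y0 ω, S0 ω)) ∂P
        = ∫ ω, (1 - e (X ω)) * h (X ω, (Y0 ω, S0 ω)) ∂P := by
    intro h hh hInt
    have hTh : Integrable (fun ω => T ω * h (X ω, (Y0 ω, S0 ω))) P :=
      hInt.bdd_mul hT.aestronglyMeasurable (ae_of_all _ hTabs)
    have heh : Integrable (fun ω => e (X ω) * h (X ω, (Y0 ω, S0 ω))) P :=
      hInt.bdd_mul (he.comp hX).aestronglyMeasurable
        (ae_of_all _ fun ω => abs_le.mpr ⟨by linarith [(heRange (X ω)).1], (heRange (X ω)).2⟩)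
    have h0 := KEY0 h hh hInt
    calc ∫ ω, (1 - T ω) * h (X ω, (Y0 ω, S0 ω)) ∂P
        = ∫ ω, (h (X ω, (Y0 ω, S0 ω)) - T ω * h (X ω, (Y0 ω, S0 ω))) ∂P :=
          integral_congr_ae (ae_of_all _ fun ω => by ring)
      _ = (∫ ω, h (X ω, (Y0 ω, S0 ω)) ∂P) - ∫ ω, T ω * h (X ω, (Y0 ω, S0 ω)) ∂P :=
          integral_sub hInt hTh
      _ = (∫ ω, h (X ω, (Y0 ω, S0 ω)) ∂P) - ∫ ω, e (X ω) * h (X ω, (Y0 ω, S0 ω)) ∂P := by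
          rw [h0]
      _ = ∫ ω, (h (X ω, (Y0 ω, S0 ω)) - e (X ω) * h (X ω, (Y0 ω, S0 ω))) ∂P :=
          (integral_sub hInt heh).symm
      _ = ∫ ω, (1 - e (X ω)) * h (X ω, (Y0 ω, S0 ω)) ∂P :=
          integral_congr_ae (ae_of_all _ fun ω => by ring)
  -- name the three integrands
  set IA : Ω → ℝ := fun ω =>
    T ω / e (X ω) * (obs T Y0 Y1 ω - mt 1 (X ω) (obs T S0 S1 ω))
      - (1 - T ω) / (1 - e (X ω)) * (obs T Y0 Y1 ω - mt 0 (X ω) (obs T S0 S1 ω)) with hIAdef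
  set IC : Ω → ℝ := fun ω =>
    T ω / e (X ω) * (mt 1 (X ω) (obs T S0 S1 ω) - mu 1 (X ω))
      - (1 - T ω) / (1 - e (X ω)) * (mt 0 (X ω) (obs T S0 S1 ω) - mu 0 (X ω)) with hICdef
  set ID : Ω → ℝ := fun ω =>
    T ω / e (X ω) * (obs T Y0 Y1 ω - mu 1 (X ω))
      - (1 - T ω) / (1 - e (X ω)) * (obs T Y0 Y1 ω - mu 0 (X ω)) with hIDdef
  have hEA2' : EA2 = ∫ ω, IA ω ^ 2 ∂P := hEA2
  have hEC2' : EC2 = ∫ ω, IC ω ^ 2 ∂P := hEC2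
  have hVi' : Vi = (∫ ω, ID ω ^ 2 ∂P) + EB2 := hVi
  -- obs computations
  have hobs0 : ∀ ω, T ω = 0 → obs T S0 S1 ω = S0 ω ∧ obs T Y0 Y1 ω = Y0 ω :=
    fun ω h' => ⟨by simp [obs, h'], by simp [obs, h']⟩
  have hobs1 : ∀ ω, T ω = 1 → obs T S0 S1 ω = S1 ω ∧ obs T Y0 Y1 ω = Y1 ω :=
    fun ω h' => ⟨by simp [obs, h'], by simp [obs, h']⟩
  -- pointwise potential-outcome forms
  have hIApt : ∀ ω, IA ω = T ω / e (X ω) * (Y1 ω - mt 1 (X ω) (S1 ω))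
      - (1 - T ω) / (1 - e (X ω)) * (Y0 ω - mt 0 (X ω) (S0 ω)) := by
    intro ω
    rcases hT01 ω with h'|h'
    · obtain ⟨hs', hy'⟩ := hobs0 ω h'
      simp only [hIAdef, hs', hy', h']
      ring
    · obtain ⟨hs', hy'⟩ := hobs1 ω h'
      simp only [hIAdef, hs', hy', h']
      ring
  have hICpt : ∀ ω, IC ω = T ω / e (X ω) * (mt 1 (X ω) (S1 ω) - mu 1 (X ω))
      - (1 - T ω) / (1 - e (X ω)) * (mt 0 (X ω) (S0 ω) - mu 0 (X ω)) := by
    intro ω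
    rcases hT01 ω with h'|h'
    · obtain ⟨hs', hy'⟩ := hobs0 ω h'
      simp only [hICdef, hs', hy', h']
      ring
    · obtain ⟨hs', hy'⟩ := hobs1 ω h'
      simp only [hICdef, hs', hy', h']
      ring
  have hDAC : ∀ ω, ID ω = IA ω + IC ω := by
    intro ω
    simp only [hIDdef, hIAdef, hICdef]
    ring
  -- L² membership of A and C
  have hIAL2 : MemLp IA 2 P := by
    have h1 : MemLp (fun ω => (T ω / e (X ω)) * (Y1 ω - mt 1 (X ω) (S1 ω))) 2 P :=
      aux_memL2_weight hYZ1L2 hw1sm hbT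
    have h0 : MemLp (fun ω => ((1 - T ω) / (1 - e (X ω))) * (Y0 ω - mt 0 (X ω) (S0 ω))) 2 P :=
      aux_memL2_weight hYZ0L2 hw0sm hbT0
    refine MemLp.ae_eq (Filter.Eventually.of_forall fun ω => ?_) (h1.sub h0)
    simp only [Pi.sub_apply]
    rw [hIApt ω]
  have hICL2 : MemLp IC 2 P := by
    have h1 : MemLp (fun ω => (T ω / e (X ω)) * (mt 1 (X ω) (S1 ω) - mu 1 (X ω))) 2 P :=
      aux_memL2_weight hf1L2 hw1sm hbT
    have h0 : MemLp
        (fun ω => ((1 - T ω) / (1 - e (X ω))) * (mt 0 (X ω) (S0 ω) - mu 0 (X ω))) 2 P :=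
      aux_memL2_weight hf0L2 hw0sm hbT0
    refine MemLp.ae_eq (Filter.Eventually.of_forall fun ω => ?_) (h1.sub h0)
    simp only [Pi.sub_apply]
    rw [hICpt ω]
  -- measurable auxiliary functions on 𝒳 × (ℝ × 𝒮)
  have hq1 : Measurable (fun q : 𝒳 × (ℝ × 𝒮) => mt 1 q.1 q.2.2) :=
    hmt1'.comp (measurable_fst.prodMk (measurable_snd.comp measurable_snd))
  have hq0 : Measurable (fun q : 𝒳 × (ℝ × 𝒮) => mt 0 q.1 q.2.2) :=
    hmt0'.comp (measurable_fst.prodMk (measurable_snd.comp measurable_snd))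
  have hqu1 : Measurable (fun q : 𝒳 × (ℝ × 𝒮) => mu 1 q.1) := hmu1'.comp measurable_fst
  have hqu0 : Measurable (fun q : 𝒳 × (ℝ × 𝒮) => mu 0 q.1) := hmu0'.comp measurable_fst
  have hqy : Measurable (fun q : 𝒳 × (ℝ × 𝒮) => q.2.1) := measurable_fst.comp measurable_snd
  have hqe : Measurable (fun q : 𝒳 × (ℝ × 𝒮) => e q.1) := he.comp measurable_fst
  -- the h-functions for the squared term
  set h1f : 𝒳 × (ℝ × 𝒮) → ℝ := fun q => ((mt 1 q.1 q.2.2 - mu 1 q.1) / e q.1) ^ 2 with hh1def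
  set h0f : 𝒳 × (ℝ × 𝒮) → ℝ := fun q => ((mt 0 q.1 q.2.2 - mu 0 q.1) / (1 - e q.1)) ^ 2
    with hh0def
  have hh1meas : Measurable h1f := ((hq1.sub hqu1).div hqe).pow_const 2
  have hh0meas : Measurable h0f := ((hq0.sub hqu0).div (measurable_const.sub hqe)).pow_const 2
  have hsq1 : AEStronglyMeasurable (fun ω => (1 / e (X ω)) ^ 2) P :=
    ((measurable_const.div (he.comp hX)).pow_const 2).aestronglyMeasurable
  have hsq0 : AEStronglyMeasurable (fun ω => (1 / (1 - e (X ω))) ^ 2) P :=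
    ((measurable_const.div (measurable_const.sub (he.comp hX))).pow_const 2).aestronglyMeasurable
  have hsq1b : ∀ᵐ ω ∂P, |(1 / e (X ω)) ^ 2| ≤ (1/ε) ^ 2 := by
    filter_upwards [hb1] with ω hω
    rw [abs_pow]
    exact pow_le_pow_left₀ (abs_nonneg _) hω 2
  have hsq0b : ∀ᵐ ω ∂P, |(1 / (1 - e (X ω))) ^ 2| ≤ (1/ε) ^ 2 := by
    filter_upwards [hb0] with ω hω
    rw [abs_pow]
    exact pow_le_pow_left₀ (abs_nonneg _) hω 2
  have hh1int : Integrable (fun ω => h1f (X ω, (Y1 ω, S1 ω))) P := by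
    have h := (hf1L2.integrable_sq).bdd_mul hsq1 hsq1b
    refine h.congr (ae_of_all _ fun ω => ?_)
    simp only [hh1def]
    ring
  have hh0int : Integrable (fun ω => h0f (X ω, (Y0 ω, S0 ω))) P := by
    have h := (hf0L2.integrable_sq).bdd_mul hsq0 hsq0b
    refine h.congr (ae_of_all _ fun ω => ?_)
    simp only [hh0def]
    generalize (1:ℝ) - e (X ω) = b
    ring
  -- the k-functions for the cross term
  set k1 : 𝒳 × (ℝ × 𝒮) → ℝ :=
    fun q => (q.2.1 - mt 1 q.1 q.2.2) * (mt 1 q.1 q.2.2 - mu 1 q.1) / (e q.1) ^ 2 with hk1def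
  set k0 : 𝒳 × (ℝ × 𝒮) → ℝ :=
    fun q => (q.2.1 - mt 0 q.1 q.2.2) * (mt 0 q.1 q.2.2 - mu 0 q.1) / (1 - e q.1) ^ 2 with hk0def
  have hk1meas : Measurable k1 := ((hqy.sub hq1).mul (hq1.sub hqu1)).div (hqe.pow_const 2)
  have hk0meas : Measurable k0 :=
    ((hqy.sub hq0).mul (hq0.sub hqu0)).div ((measurable_const.sub hqe).pow_const 2)
  have hk1int : Integrable (fun ω => k1 (X ω, (Y1 ω, S1 ω))) P := by
    have hprod : Integrable
        (fun ω => (Y1 ω - mt 1 (X ω) (S1 ω)) * (mt 1 (X ω) (S1 ω) - mu 1 (X ω))) P :=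
      aux_mul_integrable hYZ1L2 hf1L2
    have h := hprod.bdd_mul hsq1 hsq1b
    refine h.congr (ae_of_all _ fun ω => ?_)
    simp only [hk1def]
    ring
  have hk0int : Integrable (fun ω => k0 (X ω, (Y0 ω, S0 ω))) P := by
    have hprod : Integrable
        (fun ω => (Y0 ω - mt 0 (X ω) (S0 ω)) * (mt 0 (X ω) (S0 ω) - mu 0 (X ω))) P :=
      aux_mul_integrable hYZ0L2 hf0L2
    have h := hprod.bdd_mul hsq0 hsq0b
    refine h.congr (ae_of_all _ fun ω => ?_)
    simp only [hk0def]
    generalize (1:ℝ) - e (X ω) = b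
    ring
  -- cross terms vanish
  have hcross1 : ∫ ω, e (X ω) * k1 (X ω, (Y1 ω, S1 ω)) ∂P = 0 := by
    have hφm : StronglyMeasurable[m2 X S1]
        (fun ω => (mt 1 (X ω) (S1 ω) - mu 1 (X ω)) / e (X ω)) := by
      have hF : Measurable (fun q : 𝒳 × 𝒮 => (mt 1 q.1 q.2 - mu 1 q.1) / e q.1) :=
        (hmt1'.sub (hmu1'.comp measurable_fst)).div (he.comp measurable_fst)
      exact (hF.comp hXS1m).stronglyMeasurable
    have hφ2 : MemLp (fun ω => (mt 1 (X ω) (S1 ω) - mu 1 (X ω)) / e (X ω)) 2 P := by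
      refine MemLp.ae_eq (Filter.Eventually.of_forall fun ω => ?_)
        (aux_memL2_weight hf1L2 hg1ae hb1)
      show (1 / e (X ω)) * (mt 1 (X ω) (S1 ω) - mu 1 (X ω)) = _
      ring
    have hORT := aux_ORT hm21 hφm hφ2 hY1L2 hZ1ae hZ1L2
    refine Eq.trans ?_ hORT
    refine integral_congr_ae ?_
    filter_upwards [h2e] with ω hω
    have hne : e (X ω) ≠ 0 := ne_of_gt (lt_of_lt_of_le hε0 hω.1)
    simp only [hk1def]
    field_simp
  have hcross0 : ∫ ω, (1 - e (X ω)) * k0 (X ω, (Y0 ω, S0 ω)) ∂P = 0 := by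
    have hφm : StronglyMeasurable[m2 X S0]
        (fun ω => (mt 0 (X ω) (S0 ω) - mu 0 (X ω)) / (1 - e (X ω))) := by
      have hF : Measurable (fun q : 𝒳 × 𝒮 => (mt 0 q.1 q.2 - mu 0 q.1) / (1 - e q.1)) :=
        (hmt0'.sub (hmu0'.comp measurable_fst)).div (measurable_const.sub (he.comp measurable_fst))
      exact (hF.comp hXS0m).stronglyMeasurable
    have hφ2 : MemLp (fun ω => (mt 0 (X ω) (S0 ω) - mu 0 (X ω)) / (1 - e (X ω))) 2 P := by
      refine MemLp.ae_eq (Filter.Eventually.of_forall fun ω => ?_)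
        (aux_memL2_weight hf0L2 hg0ae hb0)
      show (1 / (1 - e (X ω))) * (mt 0 (X ω) (S0 ω) - mu 0 (X ω)) = _
      ring
    have hORT := aux_ORT hm20 hφm hφ2 hY0L2 hZ0ae hZ0L2
    refine Eq.trans ?_ hORT
    refine integral_congr_ae ?_
    filter_upwards [h2e] with ω hω
    have hne : (1:ℝ) - e (X ω) ≠ 0 := ne_of_gt (lt_of_lt_of_le hε0 (by linarith [hω.2]))
    simp only [hk0def]
    field_simp
  have hAC : ∫ ω, IA ω * IC ω ∂P = 0 := by
    have hpt : ∀ ω, IA ω * IC ω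
        = T ω * k1 (X ω, (Y1 ω, S1 ω)) + (1 - T ω) * k0 (X ω, (Y0 ω, S0 ω)) := by
      intro ω
      rcases hT01 ω with h'|h'
      · obtain ⟨hs', hy'⟩ := hobs0 ω h'
        simp only [hIAdef, hICdef, hk1def, hk0def, hs', hy', h']
        generalize (1:ℝ) - e (X ω) = b
        ring
      · obtain ⟨hs', hy'⟩ := hobs1 ω h'
        simp only [hIAdef, hICdef, hk1def, hk0def, hs', hy', h']
        generalize (1:ℝ) - e (X ω) = b
        ring
    have hTk1 : Integrable (fun ω => T ω * k1 (X ω, (Y1 ω, S1 ω))) P :=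
      hk1int.bdd_mul hT.aestronglyMeasurable (ae_of_all _ hTabs)
    have hTk0 : Integrable (fun ω => (1 - T ω) * k0 (X ω, (Y0 ω, S0 ω))) P :=
      hk0int.bdd_mul (measurable_const.sub hT).aestronglyMeasurable (ae_of_all _ h1Tabs)
    calc ∫ ω, IA ω * IC ω ∂P
        = ∫ ω, (T ω * k1 (X ω, (Y1 ω, S1 ω)) + (1 - T ω) * k0 (X ω, (Y0 ω, S0 ω))) ∂P :=
          integral_congr_ae (ae_of_all _ hpt)
      _ = (∫ ω, T ω * k1 (X ω, (Y1 ω, S1 ω)) ∂P)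
          + ∫ ω, (1 - T ω) * k0 (X ω, (Y0 ω, S0 ω)) ∂P := integral_add hTk1 hTk0
      _ = (∫ ω, e (X ω) * k1 (X ω, (Y1 ω, S1 ω)) ∂P)
          + ∫ ω, (1 - e (X ω)) * k0 (X ω, (Y0 ω, S0 ω)) ∂P := by
          rw [KEY1 k1 hk1meas hk1int, KEY0' k0 hk0meas hk0int]
      _ = 0 := by rw [hcross1, hcross0]; norm_num
  -- EC2 in weighted-variance form
  have hC1 : ∫ ω, T ω * h1f (X ω, (Y1 ω, S1 ω)) ∂P
      = ∫ ω, (1 / e (X ω)) * (mt 1 (X ω) (S1 ω) - mu 1 (X ω)) ^ 2 ∂P := by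
    rw [KEY1 h1f hh1meas hh1int]
    refine integral_congr_ae ?_
    filter_upwards [h2e] with ω hω
    have hne : e (X ω) ≠ 0 := ne_of_gt (lt_of_lt_of_le hε0 hω.1)
    simp only [hh1def]
    field_simp
  have hC0 : ∫ ω, (1 - T ω) * h0f (X ω, (Y0 ω, S0 ω)) ∂P
      = ∫ ω, (1 / (1 - e (X ω))) * (mt 0 (X ω) (S0 ω) - mu 0 (X ω)) ^ 2 ∂P := by
    rw [KEY0' h0f hh0meas hh0int]
    refine integral_congr_ae ?_
    filter_upwards [h2e] with ω hω
    have hne : (1:ℝ) - e (X ω) ≠ 0 := ne_of_gt (lt_of_lt_of_le hε0 (by linarith [hω.2]))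
    simp only [hh0def]
    field_simp
  have hECsplit : EC2 = (∫ ω, (1 / e (X ω)) * (mt 1 (X ω) (S1 ω) - mu 1 (X ω)) ^ 2 ∂P)
      + ∫ ω, (1 / (1 - e (X ω))) * (mt 0 (X ω) (S0 ω) - mu 0 (X ω)) ^ 2 ∂P := by
    have hpt : ∀ ω, IC ω ^ 2
        = T ω * h1f (X ω, (Y1 ω, S1 ω)) + (1 - T ω) * h0f (X ω, (Y0 ω, S0 ω)) := by
      intro ω
      rcases hT01 ω with h'|h'
      · obtain ⟨hs', hy'⟩ := hobs0 ω h'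
        simp only [hICdef, hh1def, hh0def, hs', hy', h']
        generalize (1:ℝ) - e (X ω) = b
        ring
      · obtain ⟨hs', hy'⟩ := hobs1 ω h'
        simp only [hICdef, hh1def, hh0def, hs', hy', h']
        generalize (1:ℝ) - e (X ω) = b
        ring
    have hTh1 : Integrable (fun ω => T ω * h1f (X ω, (Y1 ω, S1 ω))) P :=
      hh1int.bdd_mul hT.aestronglyMeasurable (ae_of_all _ hTabs)
    have hTh0 : Integrable (fun ω => (1 - T ω) * h0f (X ω, (Y0 ω, S0 ω))) P :=
      hh0int.bdd_mul (measurable_const.sub hT).aestronglyMeasurable (ae_of_all _ h1Tabs)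
    calc EC2 = ∫ ω, IC ω ^ 2 ∂P := hEC2'
      _ = ∫ ω, (T ω * h1f (X ω, (Y1 ω, S1 ω)) + (1 - T ω) * h0f (X ω, (Y0 ω, S0 ω))) ∂P :=
          integral_congr_ae (ae_of_all _ hpt)
      _ = (∫ ω, T ω * h1f (X ω, (Y1 ω, S1 ω)) ∂P)
          + ∫ ω, (1 - T ω) * h0f (X ω, (Y0 ω, S0 ω)) ∂P := integral_add hTh1 hTh0
      _ = _ := by rw [hC1, hC0]
  -- VS in weighted-variance form
  have hg1m : StronglyMeasurable[mX X] (fun ω => 1 / e (X ω)) :=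
    ((measurable_const.div he).comp hXm).stronglyMeasurable
  have hg0m : StronglyMeasurable[mX X] (fun ω => 1 / (1 - e (X ω))) :=
    ((measurable_const.div (measurable_const.sub he)).comp hXm).stronglyMeasurable
  have hM1m : StronglyMeasurable[mX X] (fun ω => mu 1 (X ω)) :=
    (hmu1'.comp hXm).stronglyMeasurable
  have hM0m : StronglyMeasurable[mX X] (fun ω => mu 0 (X ω)) :=
    (hmu0'.comp hXm).stronglyMeasurable
  have hCV1 := aux_CV hm hg1m hb1 hZ1L2 hM1m hM1L2 hM1tow
  have hCV0 := aux_CV hm hg0m hb0 hZ0L2 hM0m hM0L2 hM0tow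
  have hi1 : Integrable
      (fun ω => (1 / e (X ω)) * condVar P (mX X) (fun ω' => mt 1 (X ω') (S1 ω')) ω) P := by
    have h : Integrable (fun ω => (P[fun ω' => (mt 1 (X ω') (S1 ω')) ^ 2|mX X]) ω
        - ((P[fun ω' => mt 1 (X ω') (S1 ω')|mX X]) ω) ^ 2) P :=
      integrable_condExp.sub (aux_memL2_condexp hm hZ1L2).integrable_sq
    exact h.bdd_mul hg1ae hb1
  have hi0 : Integrable
      (fun ω => (1 / (1 - e (X ω))) * condVar P (mX X) (fun ω' => mt 0 (X ω') (S0 ω')) ω) P := by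
    have h : Integrable (fun ω => (P[fun ω' => (mt 0 (X ω') (S0 ω')) ^ 2|mX X]) ω
        - ((P[fun ω' => mt 0 (X ω') (S0 ω')|mX X]) ω) ^ 2) P :=
      integrable_condExp.sub (aux_memL2_condexp hm hZ0L2).integrable_sq
    exact h.bdd_mul hg0ae hb0
  have hVS1 : ∫ ω, (1 / e (X ω)) * condVar P (mX X) (fun ω' => mt 1 (X ω') (S1 ω')) ω ∂P
      = ∫ ω, (1 / e (X ω)) * (mt 1 (X ω) (S1 ω) - mu 1 (X ω)) ^ 2 ∂P := hCV1.symm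
  have hVS0 : ∫ ω, (1 / (1 - e (X ω)))
        * condVar P (mX X) (fun ω' => mt 0 (X ω') (S0 ω')) ω ∂P
      = ∫ ω, (1 / (1 - e (X ω))) * (mt 0 (X ω) (S0 ω) - mu 0 (X ω)) ^ 2 ∂P := hCV0.symm
  have hVSsplit : VS = (∫ ω, (1 / e (X ω)) * (mt 1 (X ω) (S1 ω) - mu 1 (X ω)) ^ 2 ∂P)
      + ∫ ω, (1 / (1 - e (X ω))) * (mt 0 (X ω) (S0 ω) - mu 0 (X ω)) ^ 2 ∂P := by
    rw [hVS, integral_add hi1 hi0, hVS1, hVS0]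
  have hECVS : EC2 = VS := hECsplit.trans hVSsplit.symm
  -- decomposition of the setting-IV variance
  have hIA2int : Integrable (fun ω => IA ω ^ 2) P := hIAL2.integrable_sq
  have hIC2int : Integrable (fun ω => IC ω ^ 2) P := hICL2.integrable_sq
  have hIACint : Integrable (fun ω => IA ω * IC ω) P := aux_mul_integrable hIAL2 hICL2
  have hDsq : ∫ ω, ID ω ^ 2 ∂P = EA2 + EC2 := by
    have hpt : ∀ ω, ID ω ^ 2 = (IA ω ^ 2 + 2 * (IA ω * IC ω)) + IC ω ^ 2 := fun ω => by
      rw [hDAC ω]; ring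
    have hmid : Integrable (fun ω => 2 * (IA ω * IC ω)) P := hIACint.const_mul 2
    have hfirst : Integrable (fun ω => IA ω ^ 2 + 2 * (IA ω * IC ω)) P := hIA2int.add hmid
    calc ∫ ω, ID ω ^ 2 ∂P
        = ∫ ω, ((IA ω ^ 2 + 2 * (IA ω * IC ω)) + IC ω ^ 2) ∂P :=
          integral_congr_ae (ae_of_all _ hpt)
      _ = ((∫ ω, IA ω ^ 2 ∂P) + ∫ ω, 2 * (IA ω * IC ω) ∂P) + ∫ ω, IC ω ^ 2 ∂P := by
          rw [integral_add hfirst hIC2int, integral_add hIA2int hmid]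
      _ = EA2 + EC2 := by
          rw [integral_const_mul, hAC, mul_zero, add_zero, ← hEA2', ← hEC2']
  -- conclusion
  constructor
  · rw [hVi', hVii, ← hECVS]
    linear_combination hDsq
  · rw [hVii, hViii, ← hECVS]
    ring
end
end
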